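/- Let f be a bounded automorphism and g a contracting automorphism of the regular rooted d-ary tree T, and suppose f and g are conjugate in Aut(T). Then f and g are conjugate in the group F(X) of finite-state automorphisms if and only if g has finite orbit-signalizer. -/

import Mathlib

open List

/-- Vertices of the rooted `d`-ary tree `T`: finite words over the alphabet
`X = Fin d`. -/
abbrev Vertex (d : ℕ) := List (Fin d)

/-- `g` is an automorphism of the rooted `d`-ary tree: a bijection of the
vertex set `X*` preserving word length and the prefix relation. -/
def IsTreeAut {d : ℕ} (g : Equiv.Perm (Vertex d)) : Prop :=
  (∀ v : Vertex d, (g v).length = v.length) ∧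
    ∀ v w : Vertex d, g v <+: g (v ++ w)

theorem IsTreeAut.prefix_mono {d : ℕ} {g : Equiv.Perm (Vertex d)} (hg : IsTreeAut g)
    {u u' : Vertex d} (h : u <+: u') : g u <+: g u' := by
  obtain ⟨t, rfl⟩ := h
  exact hg.2 u t

/-- The automorphism group `Aut(T)` of the rooted `d`-ary tree, as a subgroup
of the group of permutations of the vertex set. -/
def treeAut (d : ℕ) : Subgroup (Equiv.Perm (Vertex d)) where
  carrier := {g | IsTreeAut g}
  one_mem' := ⟨fun _ => rfl, fun v w => ⟨w, rfl⟩⟩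
  mul_mem' := by
    intro g h hg hh
    obtain ⟨hg1, hg2⟩ := hg
    obtain ⟨hh1, hh2⟩ := hh
    refine ⟨fun v => ?_, fun v w => ?_⟩
    · simp [Equiv.Perm.mul_apply, hg1, hh1]
    · obtain ⟨t, ht⟩ := hh2 v w
      simp only [Equiv.Perm.mul_apply]
      rw [← ht]
      exact hg2 (h v) t
  inv_mem' := by
    intro g hgmem
    obtain ⟨hg1, hg2⟩ := hgmem
    have hg : IsTreeAut g := ⟨hg1, hg2⟩
    have hlen' : ∀ v : Vertex d, (g⁻¹ v).length = v.length := by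
      intro v
      conv_rhs => rw [← (Equiv.Perm.eq_inv_iff_eq (f := g) (x := g⁻¹ v) (y := v)).mp rfl]
      rw [hg1]
    refine ⟨hlen', fun v w => ?_⟩
    have hle : (g⁻¹ v).length ≤ (g⁻¹ (v ++ w)).length := by
      have h1 := hlen' v
      have h2 := hlen' (v ++ w)
      rw [List.length_append] at h2
      omega
    have htp : (g⁻¹ (v ++ w)).take (g⁻¹ v).length <+: g⁻¹ (v ++ w) :=
      List.take_prefix _ _
    have hgtp : g ((g⁻¹ (v ++ w)).take (g⁻¹ v).length) <+: v ++ w := by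
      have := hg.prefix_mono htp
      rwa [(Equiv.Perm.eq_inv_iff_eq (f := g) (x := g⁻¹ (v ++ w)) (y := v ++ w)).mp rfl] at this
    have hlen_tp : (g ((g⁻¹ (v ++ w)).take (g⁻¹ v).length)).length = v.length := by
      rw [hg1, List.length_take, min_eq_left hle, hlen' v]
    have hveq : g ((g⁻¹ (v ++ w)).take (g⁻¹ v).length) = v := by
      have h1 := List.prefix_iff_eq_take.mp hgtp
      have h2 := List.prefix_iff_eq_take.mp (List.prefix_append v w)
      rw [h1, hlen_tp]
      exact h2.symm
    have hkey : (g⁻¹ (v ++ w)).take (g⁻¹ v).length = g⁻¹ v := by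
      apply g.injective
      rw [hveq, (Equiv.Perm.eq_inv_iff_eq (f := g) (x := g⁻¹ v) (y := v)).mp rfl]
    rw [← hkey]
    exact htp

open scoped Classical in
/-- The state (section) `g|_v` of `g` at the vertex `v` : the unique
automorphism satisfying `g (v ++ w) = g v ++ (g|_v) w` for all `w`. -/
noncomputable def state {d : ℕ} (g : Equiv.Perm (Vertex d)) (v : Vertex d) :
    Equiv.Perm (Vertex d) :=
  if h : Function.Bijective (fun w : Vertex d => (g (v ++ w)).drop v.length) then
    Equiv.ofBijective _ h
  else 1

/-- A finite-state automorphism: one having finitely many states.  The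
finite-state automorphisms form the group `F(X)`. -/
def FiniteState {d : ℕ} (g : Equiv.Perm (Vertex d)) : Prop :=
  (Set.range fun v : Vertex d => state g v).Finite

/-- The cardinality of the orbit `Orb_a(v)` of the vertex `v` under the cyclic
group generated by `a`. -/
noncomputable def orbitCard {d : ℕ} (a : Equiv.Perm (Vertex d)) (v : Vertex d) : ℕ :=
  Nat.card (Set.range fun n : ℤ => (a ^ n) v)

/-- The orbit-signalizer `OS(a) = { a^m|_v : v ∈ X^*, m = |Orb_a(v)| }`. -/
noncomputable def OS {d : ℕ} (a : Equiv.Perm (Vertex d)) : Set (Equiv.Perm (Vertex d)) :=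
  {s | ∃ v : Vertex d, s = state (a ^ orbitCard a v) v}

/-- `a` has finite orbit-signalizer. -/
def FiniteOS {d : ℕ} (a : Equiv.Perm (Vertex d)) : Prop := (OS a).Finite

/-- A self-similar (state-closed) subgroup. -/
def SelfSimilar {d : ℕ} (G : Subgroup (Equiv.Perm (Vertex d))) : Prop :=
  ∀ g ∈ G, ∀ v : Vertex d, state g v ∈ G

/-- A contracting group: there is a finite set `N ⊆ G` such that every
`g ∈ G` has all its states in `N` from some level on. -/
def ContractingGroup {d : ℕ} (G : Subgroup (Equiv.Perm (Vertex d))) : Prop :=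
  ∃ N : Set (Equiv.Perm (Vertex d)), N.Finite ∧ N ⊆ (G : Set (Equiv.Perm (Vertex d))) ∧
    ∀ g ∈ G, ∃ n : ℕ, ∀ v : Vertex d, n ≤ v.length → state g v ∈ N

/-- A contracting automorphism: the self-similar group generated by all of its
states is contracting. -/
def ContractingAut {d : ℕ} (f : Equiv.Perm (Vertex d)) : Prop :=
  ContractingGroup (Subgroup.closure (Set.range fun v : Vertex d => state f v))

/-- The activity sequence `θ_k(g)`: the number of vertices `v` of level `k`
whose state `g|_v` acts nontrivially on the first level `X`. -/
noncomputable def theta {d : ℕ} (g : Equiv.Perm (Vertex d)) (k : ℕ) : ℕ :=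
  Nat.card {v : Vertex d // v.length = k ∧ ∃ x : Fin d, state g v [x] ≠ [x]}

/-- A bounded automorphism: a finite-state automorphism with bounded activity
sequence.  The bounded automorphisms form the group `Pol(0)`. -/
def BoundedAut {d : ℕ} (g : Equiv.Perm (Vertex d)) : Prop :=
  FiniteState g ∧ ∃ C : ℕ, ∀ k : ℕ, theta g k ≤ C

/-- A polynomial automorphism (an element of `Pol(∞)`): a finite-state
automorphism whose activity sequence is polynomially bounded. -/
def PolyAut {d : ℕ} (g : Equiv.Perm (Vertex d)) : Prop :=
  FiniteState g ∧ ∃ p : Polynomial ℕ, ∀ k : ℕ, theta g k ≤ p.eval k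

/-- A finitary automorphism (an element of `Pol(-1)`): all states at some
level are trivial. -/
def Finitary {d : ℕ} (g : Equiv.Perm (Vertex d)) : Prop :=
  ∃ k : ℕ, ∀ v : Vertex d, v.length = k → state g v = 1

/-- A functionally recursive automorphism: a member of some finitely generated
self-similar subgroup of `Aut(T)`.  These form the group `FR(X)`. -/
def FunctionallyRecursive {d : ℕ} (g : Equiv.Perm (Vertex d)) : Prop :=
  ∃ G : Subgroup (Equiv.Perm (Vertex d)), G ≤ treeAut d ∧ SelfSimilar G ∧
    (∃ S : Set (Equiv.Perm (Vertex d)), S.Finite ∧ G = Subgroup.closure S) ∧ g ∈ G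
theorem perm_apply_inv_self {α : Type*} (f : Equiv.Perm α) (x : α) : f (f⁻¹ x) = x :=
  (Equiv.Perm.eq_inv_iff_eq (f := f) (x := f⁻¹ x) (y := x)).mp rfl

theorem perm_inv_apply_self {α : Type*} (f : Equiv.Perm α) (x : α) : f⁻¹ (f x) = x :=
  ((Equiv.Perm.eq_inv_iff_eq (f := f) (x := x) (y := f x)).mpr rfl).symm

section Infra

variable {d : ℕ}

lemma isTreeAut_one : IsTreeAut (1 : Equiv.Perm (Vertex d)) :=
  (treeAut d).one_mem

lemma IsTreeAut.mem {g : Equiv.Perm (Vertex d)} (hg : IsTreeAut g) : g ∈ treeAut d := hg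

lemma IsTreeAut.inv {g : Equiv.Perm (Vertex d)} (hg : IsTreeAut g) : IsTreeAut g⁻¹ :=
  (treeAut d).inv_mem hg

lemma IsTreeAut.mul {g h : Equiv.Perm (Vertex d)} (hg : IsTreeAut g) (hh : IsTreeAut h) :
    IsTreeAut (g * h) := (treeAut d).mul_mem hg hh

lemma IsTreeAut.pow {g : Equiv.Perm (Vertex d)} (hg : IsTreeAut g) (n : ℕ) :
    IsTreeAut (g ^ n) := pow_mem (hg.mem) n

lemma IsTreeAut.zpow {g : Equiv.Perm (Vertex d)} (hg : IsTreeAut g) (n : ℤ) :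
    IsTreeAut (g ^ n) := zpow_mem (hg.mem) n

lemma IsTreeAut.apply_nil {g : Equiv.Perm (Vertex d)} (hg : IsTreeAut g) : g [] = [] :=
  List.length_eq_zero_iff.mp (hg.1 [])

lemma IsTreeAut.append_drop {g : Equiv.Perm (Vertex d)} (hg : IsTreeAut g) (v w : Vertex d) :
    g (v ++ w) = g v ++ (g (v ++ w)).drop v.length := by
  have h2 : g v = (g (v ++ w)).take v.length := by
    have := List.prefix_iff_eq_take.mp (hg.2 v w)
    rwa [hg.1 v] at this
  conv_lhs => rw [← List.take_append_drop v.length (g (v ++ w))]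
  rw [← h2]

lemma IsTreeAut.state_bij {g : Equiv.Perm (Vertex d)} (hg : IsTreeAut g) (v : Vertex d) :
    Function.Bijective (fun w : Vertex d => (g (v ++ w)).drop v.length) := by
  constructor
  · intro w w' h
    simp only at h
    have e1 := hg.append_drop v w
    have e2 := hg.append_drop v w'
    rw [h] at e1
    rw [← e2] at e1
    exact List.append_cancel_left (g.injective e1)
  · intro u
    have hginv : IsTreeAut g⁻¹ := hg.inv
    refine ⟨(g⁻¹ (g v ++ u)).drop v.length, ?_⟩
    have e : g⁻¹ (g v ++ u) = g⁻¹ (g v) ++ (g⁻¹ (g v ++ u)).drop (g v).length :=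
      hginv.append_drop (g v) u
    rw [perm_inv_apply_self, hg.1 v] at e
    simp only
    rw [← e, perm_apply_inv_self]
    rw [← hg.1 v]
    exact List.drop_left

lemma IsTreeAut.state_apply {g : Equiv.Perm (Vertex d)} (hg : IsTreeAut g) (v w : Vertex d) :
    state g v w = (g (v ++ w)).drop v.length := by
  rw [state, dif_pos (hg.state_bij v)]
  rfl

lemma IsTreeAut.append_state {g : Equiv.Perm (Vertex d)} (hg : IsTreeAut g) (v w : Vertex d) :
    g (v ++ w) = g v ++ state g v w := by
  rw [hg.state_apply]
  exact hg.append_drop v w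

lemma IsTreeAut.state_isTreeAut {g : Equiv.Perm (Vertex d)} (hg : IsTreeAut g) (v : Vertex d) :
    IsTreeAut (state g v) := by
  constructor
  · intro w
    rw [hg.state_apply, List.length_drop, hg.1, List.length_append]
    omega
  · intro u t
    rw [hg.state_apply, hg.state_apply]
    have h : g (v ++ u) <+: g (v ++ (u ++ t)) := by
      rw [← List.append_assoc]
      exact hg.2 (v ++ u) t
    obtain ⟨s, hs⟩ := h
    refine ⟨s, ?_⟩
    rw [← hs]
    rw [List.drop_append_of_le_length]
    rw [hg.1, List.length_append]
    omega

lemma state_one (v : Vertex d) : state (1 : Equiv.Perm (Vertex d)) v = 1 := by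
  ext w : 1
  rw [isTreeAut_one.state_apply]
  simp

lemma IsTreeAut.state_nil {g : Equiv.Perm (Vertex d)} (hg : IsTreeAut g) : state g [] = g := by
  ext w : 1
  rw [hg.state_apply]
  simp

lemma state_mul {a b : Equiv.Perm (Vertex d)} (ha : IsTreeAut a) (hb : IsTreeAut b)
    (v : Vertex d) : state (a * b) v = state a (b v) * state b v := by
  ext w : 1
  rw [Equiv.Perm.mul_apply, (ha.mul hb).state_apply, ha.state_apply, ← hb.append_state, hb.1]
  simp [Equiv.Perm.mul_apply]

lemma state_inv {a : Equiv.Perm (Vertex d)} (ha : IsTreeAut a) (v : Vertex d) :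
    state a⁻¹ (a v) = (state a v)⁻¹ := by
  have h := state_mul ha ha.inv (a v)
  rw [mul_inv_cancel, perm_inv_apply_self, state_one] at h
  exact (inv_eq_of_mul_eq_one_right h.symm).symm

lemma IsTreeAut.state_state {g : Equiv.Perm (Vertex d)} (hg : IsTreeAut g) (v w : Vertex d) :
    state (state g v) w = state g (v ++ w) := by
  ext u : 1
  rw [(hg.state_isTreeAut v).state_apply, hg.state_apply, hg.state_apply, List.append_assoc,
    List.drop_drop, List.length_append, Nat.add_comm]

lemma state_pow_of_fix {a : Equiv.Perm (Vertex d)} (ha : IsTreeAut a) {v : Vertex d}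
    (hv : a v = v) (n : ℕ) : state (a ^ n) v = (state a v) ^ n := by
  induction n with
  | zero => simp [state_one]
  | succ n ih =>
    have hfix : (a ^ n) v = v := by
      clear ih
      induction n with
      | zero => rfl
      | succ n ih => rw [pow_succ, Equiv.Perm.mul_apply, hv, ih]
    rw [pow_succ, state_mul (ha.pow n) ha, hv, ih, pow_succ]

lemma pow_apply_fix {a : Equiv.Perm (Vertex d)} {v : Vertex d} (hv : a v = v) (n : ℕ) :
    (a ^ n) v = v := by
  induction n with
  | zero => rfl
  | succ n ih => rw [pow_succ, Equiv.Perm.mul_apply, hv, ih]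

end Infra
section Orbit

variable {d : ℕ} {g : Equiv.Perm (Vertex d)}

lemma IsTreeAut.orbit_finite (hg : IsTreeAut g) (v : Vertex d) :
    (Set.range fun n : ℤ => (g ^ n) v).Finite := by
  apply (List.finite_length_eq (Fin d) v.length).subset
  rintro _ ⟨n, rfl⟩
  exact (hg.zpow n).1 v

private lemma key_period {v : Vertex d} :
    ∀ i j : ℕ, i < j → (g ^ i) v = (g ^ j) v → (g ^ (j - i)) v = v := by
  intro i j hlt heq
  have h2 : (g ^ i) ((g ^ (j - i)) v) = (g ^ i) v := by
    rw [← Equiv.Perm.mul_apply, ← pow_add, show i + (j - i) = j by omega]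
    exact heq.symm
  exact Equiv.injective _ h2

lemma IsTreeAut.exists_period (hg : IsTreeAut g) (v : Vertex d) :
    ∃ p : ℕ, 0 < p ∧ (g ^ p) v = v := by
  have hni : ¬ Function.Injective (fun n : ℕ => (g ^ n) v) := by
    intro hinj
    exact (Set.infinite_range_of_injective hinj) <| (hg.orbit_finite v).subset <| by
      rintro _ ⟨n, rfl⟩; exact ⟨(n : ℤ), by simp⟩
  rw [Function.not_injective_iff] at hni
  obtain ⟨i, j, heq, hne⟩ := hni
  rcases hne.lt_or_gt with h | h
  · exact ⟨j - i, by omega, key_period i j h heq⟩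
  · exact ⟨i - j, by omega, key_period j i h heq.symm⟩

lemma IsTreeAut.orbitCard_eq (hg : IsTreeAut g) (v : Vertex d) :
    orbitCard g v = Nat.find (hg.exists_period v) := by
  set p := Nat.find (hg.exists_period v) with hp
  obtain ⟨hppos, hpfix⟩ := Nat.find_spec (hg.exists_period v)
  have hfixz : ∀ n : ℤ, (g ^ ((p : ℤ) * n)) v = v := by
    intro n
    rw [zpow_mul, zpow_natCast]
    rcases n with m | m
    · rw [Int.ofNat_eq_coe, zpow_natCast]
      exact pow_apply_fix hpfix m
    · rw [zpow_negSucc]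
      rw [Equiv.Perm.inv_eq_iff_eq]
      exact (pow_apply_fix hpfix (m + 1)).symm
  have hbij : Function.Bijective
      (fun i : Fin p => (⟨(g ^ (i : ℕ)) v, ⟨((i : ℕ) : ℤ), by simp⟩⟩ :
        (Set.range fun n : ℤ => (g ^ n) v))) := by
    constructor
    · intro i j hij
      have heq : (g ^ (i : ℕ)) v = (g ^ (j : ℕ)) v := congrArg Subtype.val hij
      by_contra hne
      have hne' : (i : ℕ) ≠ (j : ℕ) := fun hc => hne (Fin.ext hc)
      rcases hne'.lt_or_gt with h | h
      · exact Nat.find_min (hg.exists_period v) (by omega : (j : ℕ) - (i : ℕ) < p)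
          ⟨by omega, key_period _ _ h heq⟩
      · exact Nat.find_min (hg.exists_period v) (by omega : (i : ℕ) - (j : ℕ) < p)
          ⟨by omega, key_period _ _ h heq.symm⟩
    · rintro ⟨u, n, rfl⟩
      have hdec : n = (p : ℤ) * (n / (p : ℤ)) + n % (p : ℤ) := (Int.mul_ediv_add_emod n p).symm
      have hr0 : 0 ≤ n % (p : ℤ) := Int.emod_nonneg n (by exact_mod_cast hppos.ne')
      have hrp : n % (p : ℤ) < (p : ℤ) := Int.emod_lt_of_pos n (by exact_mod_cast hppos)
      refine ⟨⟨(n % (p : ℤ)).toNat, by omega⟩, ?_⟩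
      apply Subtype.ext
      simp only
      have : (g ^ n) v = (g ^ (n % (p : ℤ))) ((g ^ ((p : ℤ) * (n / (p : ℤ)))) v) := by
        conv_lhs => rw [show n = n % (p : ℤ) + (p : ℤ) * (n / (p : ℤ)) from
          (Int.emod_add_mul_ediv n p).symm]
        rw [zpow_add, Equiv.Perm.mul_apply]
      rw [this, hfixz]
      rw [← zpow_natCast, Int.toNat_of_nonneg hr0]
  have := Nat.card_eq_of_bijective _ hbij
  rw [Nat.card_eq_fintype_card, Fintype.card_fin] at this
  rw [orbitCard, ← this]

lemma IsTreeAut.orbitCard_pos (hg : IsTreeAut g) (v : Vertex d) : 0 < orbitCard g v := by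
  rw [hg.orbitCard_eq v]
  exact (Nat.find_spec (hg.exists_period v)).1

lemma IsTreeAut.pow_orbitCard_fix (hg : IsTreeAut g) (v : Vertex d) :
    (g ^ orbitCard g v) v = v := by
  rw [hg.orbitCard_eq v]
  exact (Nat.find_spec (hg.exists_period v)).2

lemma IsTreeAut.orbitCard_min (hg : IsTreeAut g) {v : Vertex d} {n : ℕ} (hn : 0 < n)
    (hfix : (g ^ n) v = v) : orbitCard g v ≤ n := by
  rw [hg.orbitCard_eq v]
  exact Nat.find_min' _ ⟨hn, hfix⟩

lemma IsTreeAut.pow_fix_iff (hg : IsTreeAut g) {v : Vertex d} {n : ℕ} :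
    (g ^ n) v = v ↔ orbitCard g v ∣ n := by
  constructor
  · intro hfix
    have hmq : (g ^ (orbitCard g v * (n / orbitCard g v))) v = v := by
      rw [pow_mul]
      exact pow_apply_fix (hg.pow_orbitCard_fix v) _
    have hcalc : (g ^ n) v = (g ^ (n % orbitCard g v)) v := by
      conv_lhs => rw [show n = n % orbitCard g v + orbitCard g v * (n / orbitCard g v) from
        (Nat.mod_add_div n (orbitCard g v)).symm]
      rw [pow_add, Equiv.Perm.mul_apply, hmq]
    have hr : (g ^ (n % orbitCard g v)) v = v := by rw [← hcalc]; exact hfix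
    by_contra hdvd
    have hrpos : 0 < n % orbitCard g v := by
      rcases Nat.eq_zero_or_pos (n % orbitCard g v) with h0 | h
      · exact absurd (Nat.dvd_of_mod_eq_zero h0) hdvd
      · exact h
    have h1 := hg.orbitCard_min hrpos hr
    have h2 := Nat.mod_lt n (hg.orbitCard_pos v)
    omega
  · rintro ⟨k, rfl⟩
    rw [pow_mul]
    exact pow_apply_fix (hg.pow_orbitCard_fix v) k

lemma IsTreeAut.orbit_inj (hg : IsTreeAut g) {v : Vertex d} {i j : ℕ}
    (hi : i < orbitCard g v) (hj : j < orbitCard g v) (heq : (g ^ i) v = (g ^ j) v) : i = j := by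
  by_contra hne
  rcases Nat.lt_or_ge i j with h | h
  · have := hg.orbitCard_min (n := j - i) (by omega) (key_period i j h heq)
    omega
  · have hlt : j < i := by omega
    have := hg.orbitCard_min (n := i - j) (by omega) (key_period j i hlt heq.symm)
    omega

lemma conj_zpow_apply (h a : Equiv.Perm (Vertex d)) (n : ℤ) (v : Vertex d) :
    ((h * a * h⁻¹) ^ n) (h v) = h ((a ^ n) v) := by
  have : (h * a * h⁻¹) ^ n = h * a ^ n * h⁻¹ := by
    have := map_zpow (MulAut.conj h) a n
    simp only [MulAut.conj_apply] at this
    exact this.symm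
  rw [this]
  simp

lemma orbitCard_conj (h a : Equiv.Perm (Vertex d)) (v : Vertex d) :
    orbitCard (h * a * h⁻¹) (h v) = orbitCard a v := by
  unfold orbitCard
  have himg : (Set.range fun n : ℤ => ((h * a * h⁻¹) ^ n) (h v)) =
      h '' (Set.range fun n : ℤ => (a ^ n) v) := by
    ext u
    constructor
    · rintro ⟨n, rfl⟩
      exact ⟨(a ^ n) v, ⟨n, rfl⟩, (conj_zpow_apply h a n v).symm⟩
    · rintro ⟨_, ⟨n, rfl⟩, rfl⟩
      exact ⟨n, conj_zpow_apply h a n v⟩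
  rw [himg, Nat.card_coe_set_eq, Nat.card_coe_set_eq,
    Set.ncard_image_of_injective _ h.injective]

lemma state_conj {h c : Equiv.Perm (Vertex d)} (hh : IsTreeAut h) (hc : IsTreeAut c)
    {v : Vertex d} (hfix : c v = v) :
    state (h * c * h⁻¹) (h v) = state h v * state c v * (state h v)⁻¹ := by
  rw [mul_assoc, state_mul hh (hc.mul hh.inv)]
  have e1 : (c * h⁻¹) (h v) = v := by simp [hfix]
  rw [e1, state_mul hc hh.inv, perm_inv_apply_self, state_inv hh, mul_assoc]

end Orbit
section Counting

variable {d : ℕ}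

lemma exists_active_of_ne_one :
    ∀ (z : Vertex d) (s : Equiv.Perm (Vertex d)), IsTreeAut s → s z ≠ z →
      ∃ w : Vertex d, ∃ x : Fin d, state s w [x] ≠ [x] := by
  intro z
  induction z with
  | nil => intro s hs hne; exact absurd hs.apply_nil hne
  | cons y z' ih =>
    intro s hs hne
    by_cases hy : s [y] = [y]
    · have hdecomp : s (y :: z') = [y] ++ state s [y] z' := by
        have h1 := hs.append_state [y] z'
        rw [hy] at h1
        simpa using h1
      have hne' : state s [y] z' ≠ z' := by
        intro hc
        apply hne
        rw [hdecomp, hc]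
        rfl
      obtain ⟨w, x, hwx⟩ := ih (state s [y]) (hs.state_isTreeAut [y]) hne'
      refine ⟨[y] ++ w, x, ?_⟩
      rwa [← hs.state_state [y] w]
    · refine ⟨[], y, ?_⟩
      rw [hs.state_nil]
      exact hy

lemma exists_uniform_depth {a : Equiv.Perm (Vertex d)} (ha : IsTreeAut a)
    (hFS : FiniteState a) :
    ∃ D : ℕ, ∀ v : Vertex d, state a v ≠ 1 →
      ∃ w : Vertex d, w.length ≤ D ∧ ∃ x : Fin d, state a (v ++ w) [x] ≠ [x] := by
  classical
  have hR : (Set.range fun v : Vertex d => state a v).Finite := hFS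
  set c : Equiv.Perm (Vertex d) → Vertex d := fun s =>
    if h : ∃ w : Vertex d, ∃ x : Fin d, state s w [x] ≠ [x] then h.choose else [] with hc
  refine ⟨hR.toFinset.sup fun s => (c s).length, ?_⟩
  intro v hv
  have hmem : state a v ∈ hR.toFinset := by
    rw [Set.Finite.mem_toFinset]
    exact ⟨v, rfl⟩
  have hact : ∃ w : Vertex d, ∃ x : Fin d, state (state a v) w [x] ≠ [x] := by
    have hz : ∃ z, state a v z ≠ z := by
      by_contra hall
      push_neg at hall
      exact hv (Equiv.ext hall)
    obtain ⟨z, hz⟩ := hz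
    exact exists_active_of_ne_one z _ (ha.state_isTreeAut v) hz
  have hceq : c (state a v) = hact.choose := by rw [hc]; exact dif_pos hact
  refine ⟨c (state a v), ?_, ?_⟩
  · exact Finset.le_sup (f := fun s => (c s).length) hmem
  · have hspec := hact.choose_spec
    rw [← ha.state_state v, hceq]
    exact hspec

lemma theta_eq_ncard (a : Equiv.Perm (Vertex d)) (k : ℕ) :
    theta a k = {v : Vertex d | v.length = k ∧ ∃ x : Fin d, state a v [x] ≠ [x]}.ncard := by
  rw [← Nat.card_coe_set_eq]
  rfl

lemma card_nontriv_le {a : Equiv.Perm (Vertex d)} {C D : ℕ}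
    (hC : ∀ k, theta a k ≤ C)
    (hD : ∀ v : Vertex d, state a v ≠ 1 →
      ∃ w : Vertex d, w.length ≤ D ∧ ∃ x : Fin d, state a (v ++ w) [x] ≠ [x]) (k : ℕ) :
    {v : Vertex d | v.length = k ∧ state a v ≠ 1}.ncard ≤ (D + 1) * C := by
  classical
  set A : ℕ → Set (Vertex d) :=
    fun j => {v | v.length = j ∧ ∃ x : Fin d, state a v [x] ≠ [x]} with hA
  have hAfin : ∀ j, (A j).Finite := fun j =>
    (List.finite_length_eq (Fin d) j).subset (fun v hv => hv.1)
  set B : Set (Vertex d) := ⋃ j ∈ Finset.range (D + 1), A (k + j) with hB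
  have hBfin : B.Finite :=
    Set.Finite.biUnion (Finset.range (D + 1)).finite_toSet (fun j _ => hAfin (k + j))
  choose! w hwlen hwact using hD
  have hle : {v : Vertex d | v.length = k ∧ state a v ≠ 1}.ncard ≤ B.ncard := by
    refine Set.ncard_le_ncard_of_injOn (fun v => v ++ w v) ?_ ?_ hBfin
    · rintro v ⟨hvlen, hvne⟩
      refine Set.mem_iUnion.mpr ⟨(w v).length, Set.mem_iUnion.mpr ⟨?_, ?_, ?_⟩⟩
      · rw [Finset.mem_range]
        have := hwlen v hvne
        omega
      · rw [List.length_append, hvlen]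
      · exact hwact v hvne
    · rintro v ⟨hvlen, -⟩ v' ⟨hvlen', -⟩ heq
      have heq' : v ++ w v = v' ++ w v' := heq
      have h1 : (v ++ w v).take k = v := by
        rw [← hvlen]; exact List.take_left (l₁ := v) (l₂ := w v)
      have h2 : (v' ++ w v').take k = v' := by
        rw [← hvlen']; exact List.take_left (l₁ := v') (l₂ := w v')
      rw [← h1, ← h2, heq']
  refine hle.trans ?_
  have hBcard : hBfin.toFinset = (Finset.range (D + 1)).biUnion
      (fun j => (hAfin (k + j)).toFinset) := by
    ext u
    simp [hB, Set.Finite.mem_toFinset]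
  calc B.ncard = hBfin.toFinset.card := Set.ncard_eq_toFinset_card B hBfin
    _ ≤ ∑ j ∈ Finset.range (D + 1), (hAfin (k + j)).toFinset.card := by
        rw [hBcard]; exact Finset.card_biUnion_le
    _ ≤ ∑ _j ∈ Finset.range (D + 1), C := by
        apply Finset.sum_le_sum
        intro j _
        have h3 : (hAfin (k + j)).toFinset.card = theta a (k + j) := by
          rw [theta_eq_ncard, Set.ncard_eq_toFinset_card _ (hAfin (k + j))]
        rw [h3]
        exact hC (k + j)
    _ = (D + 1) * C := by
        rw [Finset.sum_const, Finset.card_range, smul_eq_mul]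

end Counting
section OSFinite

variable {d : ℕ}

lemma state_pow_eq_prod {a : Equiv.Perm (Vertex d)} (ha : IsTreeAut a) (v : Vertex d) (n : ℕ) :
    state (a ^ n) v = (((List.range n).map fun i => state a ((a ^ i) v)).reverse).prod := by
  induction n with
  | zero => simp [state_one]
  | succ n ih =>
    rw [pow_succ', state_mul ha (ha.pow n), ih, List.range_succ, List.map_append,
      List.reverse_append]
    simp

open scoped Classical in
lemma prod_filter_ne_one {G : Type*} [Group G] :
    ∀ l : List G, l.prod = (l.filter fun x => x ≠ 1).prod := by
  intro l
  induction l with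
  | nil => rfl
  | cons x t ih =>
    by_cases hx : x = 1
    · subst hx
      rw [List.prod_cons, one_mul, ih, List.filter_cons]
      simp
    · rw [List.prod_cons, List.filter_cons, if_pos (by simp [hx]), List.prod_cons, ih]

lemma finite_bounded_prods {G : Type*} [Group G] (S : Set G) (hS : S.Finite) (M : ℕ) :
    {x : G | ∃ l : List G, l.prod = x ∧ l.length ≤ M ∧ ∀ y ∈ l, y ∈ S}.Finite := by
  induction M with
  | zero =>
    apply Set.Finite.subset (Set.finite_singleton 1)
    rintro x ⟨l, rfl, hlen, -⟩
    have : l = [] := List.length_eq_zero_iff.mp (Nat.le_zero.mp hlen)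
    simp [this]
  | succ M ih =>
    apply Set.Finite.subset (Set.Finite.union (Set.finite_singleton 1)
      (Set.Finite.image2 (· * ·) hS ih))
    rintro x ⟨l, rfl, hlen, hmem⟩
    cases l with
    | nil => left; simp
    | cons y t =>
      right
      refine Set.mem_image2.mpr ⟨y, hmem y (by simp), t.prod, ⟨t, rfl, ?_,
        fun z hz => hmem z (List.mem_cons_of_mem _ hz)⟩, by simp⟩
      simp only [List.length_cons] at hlen
      omega

open scoped Classical in
lemma finite_OS_of_bounded {a : Equiv.Perm (Vertex d)} (ha : IsTreeAut a) (hb : BoundedAut a) :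
    FiniteOS a := by
  obtain ⟨hFS, C, hC⟩ := hb
  obtain ⟨D, hD⟩ := exists_uniform_depth ha hFS
  set S : Set (Equiv.Perm (Vertex d)) := Set.range fun v : Vertex d => state a v with hSdef
  have hSfin : S.Finite := hFS
  apply Set.Finite.subset (finite_bounded_prods S hSfin ((D + 1) * C))
  rintro s ⟨v, rfl⟩
  set m := orbitCard a v with hm
  set l0 : List (Equiv.Perm (Vertex d)) :=
    ((List.range m).map fun i => state a ((a ^ i) v)).reverse with hl0
  set l : List (Equiv.Perm (Vertex d)) := l0.filter (fun x => x ≠ 1) with hl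
  have hprod : state (a ^ m) v = l.prod := by
    rw [state_pow_eq_prod ha v m, prod_filter_ne_one]
  refine ⟨l, hprod.symm, ?_, ?_⟩
  · -- length bound
    have hlen1 : l.length = (((List.range m).map fun i => state a ((a ^ i) v)).filter
        (fun x => x ≠ 1)).length := by
      rw [hl, hl0, List.filter_reverse, List.length_reverse]
    set lf : List ℕ := (List.range m).filter (fun i => state a ((a ^ i) v) ≠ 1) with hlf
    have hlen2 : l.length = lf.length := by
      rw [hlen1, hlf, ← List.countP_eq_length_filter, ← List.countP_eq_length_filter,
        List.countP_map]
      rfl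
    have hnodup : lf.Nodup := (List.nodup_range (n := m)).filter _
    have hlen3 : lf.length = lf.toFinset.card := (List.toFinset_card_of_nodup hnodup).symm
    -- inject into the nontrivial-state vertices of level v.length
    have hNfin : {u : Vertex d | u.length = v.length ∧ state a u ≠ 1}.Finite :=
      (List.finite_length_eq (Fin d) v.length).subset (fun u hu => hu.1)
    have hcard : lf.toFinset.card ≤ hNfin.toFinset.card := by
      apply Finset.card_le_card_of_injOn (fun i => (a ^ i) v)
      · intro i hi
        rw [Finset.mem_coe, List.mem_toFinset, hlf, List.mem_filter] at hi
        obtain ⟨hirange, hine⟩ := hi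
        rw [Finset.mem_coe, Set.Finite.mem_toFinset]
        refine ⟨(ha.pow i).1 v, ?_⟩
        simpa using hine
      · intro i hi j hj heq
        rw [Finset.mem_coe, List.mem_toFinset, hlf, List.mem_filter, List.mem_range] at hi hj
        exact ha.orbit_inj (hm ▸ hi.1) (hm ▸ hj.1) heq
    have hN : hNfin.toFinset.card ≤ (D + 1) * C := by
      rw [← Set.ncard_eq_toFinset_card _ hNfin]
      exact card_nontriv_le hC hD v.length
    omega
  · intro y hy
    have hy0 : y ∈ l0 := List.mem_of_mem_filter hy
    rw [hl0, List.mem_reverse, List.mem_map] at hy0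
    obtain ⟨i, -, rfl⟩ := hy0
    exact ⟨(a ^ i) v, rfl⟩

end OSFinite
section Transfer

variable {d : ℕ}

lemma conj_pow_eq {G : Type*} [Group G] (h a : G) (n : ℕ) :
    (h * a * h⁻¹) ^ n = h * a ^ n * h⁻¹ := by
  have := map_pow (MulAut.conj h) a n
  simp only [MulAut.conj_apply] at this
  exact this.symm

lemma finiteOS_of_conj {f g h : Equiv.Perm (Vertex d)} (hf : IsTreeAut f)
    (hh : IsTreeAut h) (hFSh : FiniteState h) (hOSf : FiniteOS f)
    (hcj : h * f * h⁻¹ = g) : FiniteOS g := by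
  apply Set.Finite.subset (Set.Finite.image2 (fun t s => t * s * t⁻¹) hFSh hOSf)
  rintro s ⟨u, rfl⟩
  set v := h⁻¹ u with hv
  have hu : u = h v := by simp [hv]
  have hoc : orbitCard g u = orbitCard f v := by
    rw [hu, ← hcj, orbitCard_conj]
  have hfixv : (f ^ orbitCard f v) v = v := hf.pow_orbitCard_fix v
  rw [hu] at hoc ⊢
  have hpow : g ^ orbitCard g (h v) = h * f ^ orbitCard f v * h⁻¹ := by
    rw [hoc, ← hcj, conj_pow_eq]
  rw [hpow, state_conj hh (hf.pow _) hfixv]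
  exact Set.mem_image2_of_mem ⟨v, rfl⟩ ⟨v, rfl⟩

end Transfer
section PartialPowers

variable {d : ℕ}

open scoped Classical in
/-- For a bounded automorphism, the set of all sections of partial-orbit powers
`a^q|_w` with `q ≤ |Orb_a(w)|` is finite. -/
lemma finite_partial_sections_of_bounded {a : Equiv.Perm (Vertex d)} (ha : IsTreeAut a)
    (hb : BoundedAut a) :
    {s : Equiv.Perm (Vertex d) | ∃ w : Vertex d, ∃ q : ℕ, q ≤ orbitCard a w ∧
      s = state (a ^ q) w}.Finite := by
  obtain ⟨hFS, C, hC⟩ := hb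
  obtain ⟨D, hD⟩ := exists_uniform_depth ha hFS
  set S : Set (Equiv.Perm (Vertex d)) := Set.range fun v : Vertex d => state a v with hSdef
  have hSfin : S.Finite := hFS
  apply Set.Finite.subset (finite_bounded_prods S hSfin ((D + 1) * C))
  rintro s ⟨v, q, hq, rfl⟩
  set l0 : List (Equiv.Perm (Vertex d)) :=
    ((List.range q).map fun i => state a ((a ^ i) v)).reverse with hl0
  set l : List (Equiv.Perm (Vertex d)) := l0.filter (fun x => x ≠ 1) with hl
  have hprod : state (a ^ q) v = l.prod := by
    rw [state_pow_eq_prod ha v q, prod_filter_ne_one]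
  refine ⟨l, hprod.symm, ?_, ?_⟩
  · have hlen1 : l.length = (((List.range q).map fun i => state a ((a ^ i) v)).filter
        (fun x => x ≠ 1)).length := by
      rw [hl, hl0, List.filter_reverse, List.length_reverse]
    set lf : List ℕ := (List.range q).filter (fun i => state a ((a ^ i) v) ≠ 1) with hlf
    have hlen2 : l.length = lf.length := by
      rw [hlen1, hlf, ← List.countP_eq_length_filter, ← List.countP_eq_length_filter,
        List.countP_map]
      rfl
    have hnodup : lf.Nodup := (List.nodup_range (n := q)).filter _
    have hlen3 : lf.length = lf.toFinset.card := (List.toFinset_card_of_nodup hnodup).symm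
    have hNfin : {u : Vertex d | u.length = v.length ∧ state a u ≠ 1}.Finite :=
      (List.finite_length_eq (Fin d) v.length).subset (fun u hu => hu.1)
    have hcard : lf.toFinset.card ≤ hNfin.toFinset.card := by
      apply Finset.card_le_card_of_injOn (fun i => (a ^ i) v)
      · intro i hi
        rw [Finset.mem_coe, List.mem_toFinset, hlf, List.mem_filter] at hi
        obtain ⟨hirange, hine⟩ := hi
        rw [Finset.mem_coe, Set.Finite.mem_toFinset]
        refine ⟨(ha.pow i).1 v, ?_⟩
        simpa using hine
      · intro i hi j hj heq
        rw [Finset.mem_coe, List.mem_toFinset, hlf, List.mem_filter, List.mem_range] at hi hj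
        have hi' : i < orbitCard a v := lt_of_lt_of_le hi.1 hq
        have hj' : j < orbitCard a v := lt_of_lt_of_le hj.1 hq
        exact ha.orbit_inj hi' hj' heq
    have hN : hNfin.toFinset.card ≤ (D + 1) * C := by
      rw [← Set.ncard_eq_toFinset_card _ hNfin]
      exact card_nontriv_le hC hD v.length
    omega
  · intro y hy
    have hy0 : y ∈ l0 := List.mem_of_mem_filter hy
    rw [hl0, List.mem_reverse, List.mem_map] at hy0
    obtain ⟨i, -, rfl⟩ := hy0
    exact ⟨(a ^ i) v, rfl⟩

end PartialPowers
section OrbitStructure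

variable {d : ℕ}

lemma IsTreeAut.orbitCard_nil {g : Equiv.Perm (Vertex d)} (hg : IsTreeAut g) :
    orbitCard g ([] : Vertex d) = 1 := by
  have h1 : (g ^ 1) ([] : Vertex d) = [] := (hg.pow 1).apply_nil
  exact le_antisymm (hg.orbitCard_min one_pos h1) (hg.orbitCard_pos [])

lemma level_one_eq_image :
    {l : Vertex d | l.length = 1} = (fun x : Fin d => ([x] : Vertex d)) '' Set.univ := by
  ext l
  constructor
  · intro hl
    match l, hl with
    | [x], _ => exact ⟨x, trivial, rfl⟩
  · rintro ⟨x, -, rfl⟩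
    rfl

lemma IsTreeAut.orbitCard_level_one_le {g : Equiv.Perm (Vertex d)} (hg : IsTreeAut g)
    (x : Fin d) : orbitCard g [x] ≤ d := by
  have h1 : orbitCard g [x] = (Set.range fun n : ℤ => (g ^ n) [x]).ncard :=
    (Nat.card_coe_set_eq _).symm
  rw [h1]
  have h2 : (Set.range fun n : ℤ => (g ^ n) [x]) ⊆ {l : Vertex d | l.length = 1} := by
    rintro _ ⟨n, rfl⟩
    exact (hg.zpow n).1 [x]
  calc (Set.range fun n : ℤ => (g ^ n) [x]).ncard
      ≤ {l : Vertex d | l.length = 1}.ncard :=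
        Set.ncard_le_ncard h2 ((List.finite_length_eq (Fin d) 1).subset (fun l hl => hl))
    _ = d := by
        rw [level_one_eq_image, Set.ncard_image_of_injective _
          (fun x y hxy => by injection hxy), Set.ncard_univ, Nat.card_eq_fintype_card,
          Fintype.card_fin]

lemma IsTreeAut.orbitCard_pow_apply {g : Equiv.Perm (Vertex d)} (hg : IsTreeAut g)
    (v : Vertex d) (n : ℕ) : orbitCard g ((g ^ n) v) = orbitCard g v := by
  have hcomm : ∀ j : ℕ, ((g ^ j) ((g ^ n) v) = (g ^ n) v) ↔ ((g ^ j) v = v) := by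
    intro j
    rw [← Equiv.Perm.mul_apply, ← pow_add, Nat.add_comm, pow_add, Equiv.Perm.mul_apply]
    exact ⟨fun h => Equiv.injective _ h, fun h => by rw [h]⟩
  apply Nat.dvd_antisymm
  · exact hg.pow_fix_iff.mp ((hcomm _).mpr (hg.pow_orbitCard_fix v))
  · exact hg.pow_fix_iff.mp ((hcomm _).mp (hg.pow_orbitCard_fix ((g ^ n) v)))

lemma IsTreeAut.orbitCard_append {e : Equiv.Perm (Vertex d)} (he : IsTreeAut e)
    (u₁ u₂ : Vertex d) :
    orbitCard e (u₁ ++ u₂) =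
      orbitCard e u₁ * orbitCard (state (e ^ orbitCard e u₁) u₁) u₂ := by
  set m := orbitCard e u₁ with hm
  set c := state (e ^ m) u₁ with hc
  have hcaut : IsTreeAut c := (he.pow m).state_isTreeAut u₁
  set k := orbitCard c u₂ with hk
  have hfix : ∀ n : ℕ, (e ^ n) (u₁ ++ u₂) = u₁ ++ u₂ ↔ m * k ∣ n := by
    intro n
    rw [(he.pow n).append_state u₁ u₂]
    constructor
    · intro hn
      obtain ⟨h1, h2⟩ := List.append_inj hn ((he.pow n).1 u₁)
      obtain ⟨s, rfl⟩ := he.pow_fix_iff.mp h1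
      have hstate : state (e ^ (m * s)) u₁ = c ^ s := by
        rw [pow_mul, state_pow_of_fix (he.pow m) (he.pow_orbitCard_fix u₁)]
      rw [hstate] at h2
      exact mul_dvd_mul_left m (hcaut.pow_fix_iff.mp h2)
    · rintro ⟨s, rfl⟩
      have h1 : (e ^ (m * k * s)) u₁ = u₁ := he.pow_fix_iff.mpr ⟨k * s, by ring⟩
      have h2 : state (e ^ (m * k * s)) u₁ u₂ = u₂ := by
        have hs : state (e ^ (m * (k * s))) u₁ = c ^ (k * s) := by
          rw [pow_mul, state_pow_of_fix (he.pow m) (he.pow_orbitCard_fix u₁)]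
        rw [mul_assoc, hs]
        exact hcaut.pow_fix_iff.mpr ⟨s, rfl⟩
      rw [h1, h2]
  apply Nat.dvd_antisymm
  · exact he.pow_fix_iff.mp ((hfix (m * k)).mpr dvd_rfl)
  · exact (hfix _).mp (he.pow_orbitCard_fix (u₁ ++ u₂))

lemma state_pow_state {g : Equiv.Perm (Vertex d)} (hg : IsTreeAut g) (v u : Vertex d)
    (N : ℕ) :
    state ((state (g ^ orbitCard g v) v) ^ N) u =
      state (g ^ (orbitCard g v * N)) (v ++ u) := by
  have h1 : state (g ^ (orbitCard g v * N)) v = (state (g ^ orbitCard g v) v) ^ N := by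
    rw [pow_mul, state_pow_of_fix (hg.pow _) (hg.pow_orbitCard_fix v)]
  rw [← h1, IsTreeAut.state_state (hg.pow _) v u]

/-- the orbit-signalizer is closed under the child operation. -/
lemma OS_closed {g b : Equiv.Perm (Vertex d)} (hg : IsTreeAut g) (hb : b ∈ OS g)
    (u : Vertex d) : state (b ^ orbitCard b u) u ∈ OS g := by
  obtain ⟨v, rfl⟩ := hb
  refine ⟨v ++ u, ?_⟩
  rw [hg.orbitCard_append v u, state_pow_state hg v u]

/-- merging a partial power of an orbit-signalizer element into a partial power
of `g` itself. -/
lemma OS_pow_merge {g b : Equiv.Perm (Vertex d)} (hg : IsTreeAut g) (hb : b ∈ OS g)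
    (u : Vertex d) (N : ℕ) (hN : N ≤ orbitCard b u) :
    ∃ (U : Vertex d) (Q : ℕ), Q ≤ orbitCard g U ∧ state (b ^ N) u = state (g ^ Q) U := by
  obtain ⟨v, rfl⟩ := hb
  refine ⟨v ++ u, orbitCard g v * N, ?_, ?_⟩
  · rw [hg.orbitCard_append v u]
    exact Nat.mul_le_mul_left _ hN
  · rw [state_pow_state hg v u]

/-- splitting a partial power section along a prefix. -/
lemma split_state_pow {e : Equiv.Perm (Vertex d)} (he : IsTreeAut e) (u₁ u₂ : Vertex d)
    (q : ℕ) :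
    state (e ^ q) (u₁ ++ u₂) =
      state (e ^ (q % orbitCard e u₁))
          (u₁ ++ ((state (e ^ orbitCard e u₁) u₁) ^ (q / orbitCard e u₁)) u₂) *
        state ((state (e ^ orbitCard e u₁) u₁) ^ (q / orbitCard e u₁)) u₂ := by
  set m := orbitCard e u₁ with hm
  set c := state (e ^ m) u₁ with hc
  set Q := q / m with hQ
  set r := q % m with hr
  have hmpos : 0 < m := he.orbitCard_pos u₁
  have h1 : e ^ q = e ^ r * (e ^ m) ^ Q := by
    rw [← pow_mul, ← pow_add]
    congr 1
    rw [hr, hQ, Nat.mod_add_div q m]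
  rw [h1, state_mul (he.pow r) ((he.pow m).pow Q) (u₁ ++ u₂)]
  have h2 : ((e ^ m) ^ Q) (u₁ ++ u₂) = u₁ ++ (c ^ Q) u₂ := by
    rw [← pow_mul, (he.pow (m * Q)).append_state u₁ u₂]
    have hfix1 : (e ^ (m * Q)) u₁ = u₁ := he.pow_fix_iff.mpr ⟨Q, rfl⟩
    have hst : state (e ^ (m * Q)) u₁ = c ^ Q := by
      rw [pow_mul, state_pow_of_fix (he.pow m) (he.pow_orbitCard_fix u₁)]
    rw [hfix1, hst]
  have h3 : state ((e ^ m) ^ Q) (u₁ ++ u₂) = state (c ^ Q) u₂ := by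
    rw [← pow_mul, ← IsTreeAut.state_state (he.pow (m * Q)) u₁ u₂]
    have hst : state (e ^ (m * Q)) u₁ = c ^ Q := by
      rw [pow_mul, state_pow_of_fix (he.pow m) (he.pow_orbitCard_fix u₁)]
    rw [hst]
  rw [h2, h3]

end OrbitStructure
section Contracting

variable {d : ℕ}

lemma closure_le_treeAut {g : Equiv.Perm (Vertex d)} (hg : IsTreeAut g) :
    Subgroup.closure (Set.range fun v : Vertex d => state g v) ≤ treeAut d := by
  rw [Subgroup.closure_le]
  rintro _ ⟨v, rfl⟩
  exact hg.state_isTreeAut v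

lemma self_mem_closure {g : Equiv.Perm (Vertex d)} (hg : IsTreeAut g) :
    g ∈ Subgroup.closure (Set.range fun v : Vertex d => state g v) :=
  Subgroup.subset_closure ⟨[], hg.state_nil⟩

lemma state_mem_closure {g : Equiv.Perm (Vertex d)} (hg : IsTreeAut g) :
    ∀ u ∈ Subgroup.closure (Set.range fun v : Vertex d => state g v), ∀ v : Vertex d,
      state u v ∈ Subgroup.closure (Set.range fun v : Vertex d => state g v) := by
  intro u hu
  induction hu using Subgroup.closure_induction with
  | mem x hx =>
    intro v
    obtain ⟨w, rfl⟩ := hx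
    exact Subgroup.subset_closure ⟨w ++ v, (hg.state_state w v).symm⟩
  | one =>
    intro v
    rw [state_one]
    exact Subgroup.one_mem _
  | mul x y hx hy ihx ihy =>
    intro v
    have hxa : IsTreeAut x := closure_le_treeAut hg hx
    have hya : IsTreeAut y := closure_le_treeAut hg hy
    rw [state_mul hxa hya]
    exact Subgroup.mul_mem _ (ihx (y v)) (ihy v)
  | inv x hx ihx =>
    intro v
    have hxa : IsTreeAut x := closure_le_treeAut hg hx
    have hv : v = x (x⁻¹ v) := (perm_apply_inv_self x v).symm
    rw [show state x⁻¹ v = (state x (x⁻¹ v))⁻¹ by conv_lhs => rw [hv, state_inv hxa]]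
    exact Subgroup.inv_mem _ (ihx (x⁻¹ v))

lemma finiteState_of_absorb {u : Equiv.Perm (Vertex d)} (hu : IsTreeAut u)
    {N₀ : Set (Equiv.Perm (Vertex d))} (hN : N₀.Finite)
    (h : ∃ n : ℕ, ∀ v : Vertex d, n ≤ v.length → state u v ∈ N₀) : FiniteState u := by
  obtain ⟨n, hn⟩ := h
  have hsub : Set.range (fun v : Vertex d => state u v) ⊆
      N₀ ∪ (fun v : Vertex d => state u v) '' {v : Vertex d | v.length ≤ n} := by
    rintro _ ⟨v, rfl⟩
    rcases le_or_gt n v.length with h | h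
    · exact Or.inl (hn v h)
    · exact Or.inr ⟨v, le_of_lt h, rfl⟩
  exact (hN.union ((List.finite_length_le (Fin d) n).image _)).subset hsub

lemma uniform_absorb {S : Set (Equiv.Perm (Vertex d))} (hS : S.Finite)
    (Nuc : Set (Equiv.Perm (Vertex d)))
    (habs : ∀ u ∈ S, ∃ n : ℕ, ∀ v : Vertex d, n ≤ v.length → state u v ∈ Nuc) :
    ∃ n : ℕ, ∀ u ∈ S, ∀ v : Vertex d, n ≤ v.length → state u v ∈ Nuc := by
  classical
  choose! nf hnf using habs
  refine ⟨hS.toFinset.sup nf, fun u hu v hv => ?_⟩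
  exact hnf u hu v (le_trans (Finset.le_sup (hS.mem_toFinset.mpr hu)) hv)

open scoped Classical in
/-- Key finiteness: for a contracting automorphism with finite orbit-signalizer,
the partial-power sections `b^q|_u` with `b ∈ OS(g)`, `q ≤ |Orb_b(u)|` form a
finite set. -/
theorem finite_partial_sections_of_contracting {g : Equiv.Perm (Vertex d)}
    (hg : IsTreeAut g) (hcg : ContractingAut g) (hOSg : (OS g).Finite) :
    {s : Equiv.Perm (Vertex d) | ∃ b ∈ OS g, ∃ u : Vertex d, ∃ q : ℕ,
      q ≤ orbitCard b u ∧ s = state (b ^ q) u}.Finite := by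
  classical
  set G := Subgroup.closure (Set.range fun v : Vertex d => state g v) with hGdef
  have hGaut : ∀ u ∈ G, IsTreeAut u := fun u hu => closure_le_treeAut hg hu
  have hstateG : ∀ u ∈ G, ∀ v, state u v ∈ G := state_mem_closure hg
  have hgG : g ∈ G := self_mem_closure hg
  have hOSsub : ∀ b ∈ OS g, b ∈ G := by
    rintro _ ⟨v, rfl⟩
    exact hstateG _ (pow_mem hgG _) v
  have hOSaut : ∀ b ∈ OS g, IsTreeAut b := fun b hb => hGaut b (hOSsub b hb)
  obtain ⟨N₀, hN₀fin, hN₀G, habs0⟩ := hcg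
  -- section-closed finite nucleus
  set Nuc : Set (Equiv.Perm (Vertex d)) :=
    {1} ∪ ⋃ ν ∈ N₀, Set.range (fun v : Vertex d => state ν v) with hNucDef
  have hNucfin : Nuc.Finite := by
    apply Set.Finite.union (Set.finite_singleton 1)
    apply Set.Finite.biUnion hN₀fin
    intro ν hν
    exact finiteState_of_absorb (hGaut ν (hN₀G hν)) hN₀fin (habs0 ν (hN₀G hν))
  have hNucG : Nuc ⊆ (G : Set (Equiv.Perm (Vertex d))) := by
    rintro κ (hκ | hκ)
    · rw [Set.mem_singleton_iff] at hκ
      rw [hκ]; exact Subgroup.one_mem _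
    · rw [Set.mem_iUnion₂] at hκ
      obtain ⟨ν, hν, w, rfl⟩ := hκ
      exact hstateG ν (hN₀G hν) w
  have hNucaut : ∀ κ ∈ Nuc, IsTreeAut κ := fun κ hκ => hGaut κ (hNucG hκ)
  have hNucsec : ∀ κ ∈ Nuc, ∀ v : Vertex d, state κ v ∈ Nuc := by
    rintro κ (hκ | hκ) v
    · rw [Set.mem_singleton_iff] at hκ
      rw [hκ, state_one]
      exact Or.inl rfl
    · rw [Set.mem_iUnion₂] at hκ
      obtain ⟨ν, hν, w, rfl⟩ := hκ
      refine Or.inr (Set.mem_iUnion₂.mpr ⟨ν, hν, ⟨w ++ v, ?_⟩⟩)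
      exact ((hGaut ν (hN₀G hν)).state_state w v).symm
  have hN₀Nuc : N₀ ⊆ Nuc := by
    intro ν hν
    exact Or.inr (Set.mem_iUnion₂.mpr ⟨ν, hν, ⟨[], (hGaut ν (hN₀G hν)).state_nil⟩⟩)
  have habs : ∀ u ∈ G, ∃ n : ℕ, ∀ v : Vertex d, n ≤ v.length → state u v ∈ Nuc := by
    intro u hu
    obtain ⟨n, hn⟩ := habs0 u hu
    exact ⟨n, fun v hv => hN₀Nuc (hn v hv)⟩
  -- pair absorption level
  obtain ⟨L0, hL0⟩ := uniform_absorb (Set.Finite.image2 (· * ·) hNucfin hNucfin) Nuc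
    (by
      rintro _ ⟨ν, hν, ν', hν', rfl⟩
      exact habs _ (Subgroup.mul_mem _ (hNucG hν) (hNucG hν')))
  -- product absorption
  have prodAbsorb : ∀ L : ℕ, ∀ l : List (Equiv.Perm (Vertex d)), (∀ y ∈ l, y ∈ Nuc) →
      l.length ≤ 2 ^ L → ∀ v : Vertex d, L0 * L ≤ v.length → state l.prod v ∈ Nuc := by
    intro L
    induction L with
    | zero =>
      intro l hl hlen v _
      match l, hlen with
      | [], _ =>
        rw [List.prod_nil, state_one]
        exact Or.inl rfl
      | [y], _ =>
        rw [List.prod_cons, List.prod_nil, mul_one]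
        exact hNucsec y (hl y (by simp)) v
    | succ L ih =>
      intro l hl hlen v hv
      set l₁ := l.take (2 ^ L) with hl₁
      set l₂ := l.drop (2 ^ L) with hl₂
      have hsplit : l = l₁ ++ l₂ := (List.take_append_drop _ l).symm
      have hmem₁ : ∀ y ∈ l₁, y ∈ Nuc := fun y hy => hl y (hsplit ▸ List.mem_append_left _ hy)
      have hmem₂ : ∀ y ∈ l₂, y ∈ Nuc := fun y hy => hl y (hsplit ▸ List.mem_append_right _ hy)
      have hlen₁ : l₁.length ≤ 2 ^ L := by rw [hl₁, List.length_take]; omega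
      have hlen₂ : l₂.length ≤ 2 ^ L := by
        rw [hl₂, List.length_drop]
        have : 2 ^ (L + 1) = 2 ^ L + 2 ^ L := by rw [pow_succ]; omega
        omega
      have hAG : l₁.prod ∈ G := Subgroup.list_prod_mem G (fun y hy => hNucG (hmem₁ y hy))
      have hBG : l₂.prod ∈ G := Subgroup.list_prod_mem G (fun y hy => hNucG (hmem₂ y hy))
      have hA : IsTreeAut l₁.prod := hGaut _ hAG
      have hB : IsTreeAut l₂.prod := hGaut _ hBG
      set v₁ := v.take (v.length - L0) with hv₁
      set v₂ := v.drop (v.length - L0) with hv₂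
      have hvsplit : v = v₁ ++ v₂ := (List.take_append_drop _ v).symm
      have hv₁len : v₁.length = v.length - L0 := by
        rw [hv₁, List.length_take]; omega
      have hv₂len : v₂.length = L0 := by
        rw [hv₂, List.length_drop]
        have hL0v : L0 ≤ v.length := by
          calc L0 ≤ L0 * (L + 1) := Nat.le_mul_of_pos_right _ (Nat.succ_pos L)
            _ ≤ v.length := hv
        omega
      have hν₁ : state l₁.prod (l₂.prod v₁) ∈ Nuc := by
        apply ih l₁ hmem₁ hlen₁
        rw [hB.1 v₁, hv₁len]
        have : L0 * (L + 1) = L0 * L + L0 := by ring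
        omega
      have hν₂ : state l₂.prod v₁ ∈ Nuc := by
        apply ih l₂ hmem₂ hlen₂
        rw [hv₁len]
        have : L0 * (L + 1) = L0 * L + L0 := by ring
        omega
      have hkey : state l.prod v = state (state l₁.prod (l₂.prod v₁) * state l₂.prod v₁) v₂ := by
        conv_lhs => rw [hsplit, hvsplit]
        rw [List.prod_append, ← (hA.mul hB).state_state v₁ v₂, state_mul hA hB]
      rw [hkey]
      exact hL0 _ (Set.mem_image2_of_mem hν₁ hν₂) v₂ (by omega)
  -- small powers of OS elements and their shallow sections
  set P : Set (Equiv.Perm (Vertex d)) :=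
    Set.image2 (fun c (r : ℕ) => c ^ r) (OS g) (Set.Iio d) with hPdef
  have hPfin : P.Finite := Set.Finite.image2 _ hOSg (Set.finite_Iio d)
  have hPG : ∀ p ∈ P, p ∈ G := by
    rintro _ ⟨c, hc, r, -, rfl⟩
    exact pow_mem (hOSsub c hc) r
  obtain ⟨nP, hnP⟩ := uniform_absorb hPfin Nuc (fun p hp => habs p (hPG p hp))
  set SS : Set (Equiv.Perm (Vertex d)) :=
    Set.image2 (fun p (z : Vertex d) => state p z) P {z : Vertex d | z.length ≤ nP} with hSSdef
  have hSSfin : SS.Finite := Set.Finite.image2 _ hPfin (List.finite_length_le (Fin d) nP)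
  set K : Set (Equiv.Perm (Vertex d)) := Nuc ∪ SS with hKdef
  have hKfin : K.Finite := hNucfin.union hSSfin
  have hKG : ∀ y ∈ K, y ∈ G := by
    rintro y (hy | hy)
    · exact hNucG hy
    · obtain ⟨p, hp, z, -, rfl⟩ := hy
      exact hstateG p (hPG p hp) z
  obtain ⟨nK, hnK⟩ := uniform_absorb hKfin Nuc (fun yk hyk => habs yk (hKG yk hyk))
  -- sections of K-products become nucleus products
  have stateProdK : ∀ l : List (Equiv.Perm (Vertex d)), (∀ y ∈ l, y ∈ K) →
      ∀ v : Vertex d, nK ≤ v.length → ∃ l' : List (Equiv.Perm (Vertex d)),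
        (∀ y ∈ l', y ∈ Nuc) ∧ l'.length = l.length ∧ state l.prod v = l'.prod := by
    intro l
    induction l with
    | nil =>
      intro _ v _
      exact ⟨[], by simp, rfl, by simp [state_one]⟩
    | cons y t iht =>
      intro hmem v hv
      have hyK : y ∈ K := hmem y (by simp)
      have hyG : y ∈ G := hKG y hyK
      have htG : t.prod ∈ G := Subgroup.list_prod_mem G (fun z hz => hKG z
        (hmem z (List.mem_cons_of_mem _ hz)))
      obtain ⟨l', h1, h2, h3⟩ := iht (fun z hz => hmem z (List.mem_cons_of_mem _ hz)) v hv
      refine ⟨state y (t.prod v) :: l', ?_, by simp [h2], ?_⟩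
      · intro z hz
        rcases List.mem_cons.mp hz with rfl | hz'
        · exact hnK y hyK _ (by rw [(hGaut _ htG).1 v]; exact hv)
        · exact h1 z hz'
      · rw [List.prod_cons, state_mul (hGaut _ hyG) (hGaut _ htG), List.prod_cons, h3]
  -- absorption for K-products
  have KAbsorb : ∀ L : ℕ, ∀ l : List (Equiv.Perm (Vertex d)), (∀ y ∈ l, y ∈ K) →
      l.length ≤ 2 ^ L → ∀ v : Vertex d, nK + L0 * L ≤ v.length →
      state l.prod v ∈ Nuc := by
    intro L l hl hlen v hv
    set v₁ := v.take nK with hv₁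
    set v₂ := v.drop nK with hv₂
    have hvsplit : v = v₁ ++ v₂ := (List.take_append_drop _ v).symm
    have hv₁len : v₁.length = nK := by rw [hv₁, List.length_take]; omega
    have hv₂len : v₂.length = v.length - nK := by rw [hv₂, List.length_drop]
    obtain ⟨l', hNl', hlenl', hstate⟩ := stateProdK l hl v₁ (by omega)
    have hlG : l.prod ∈ G := Subgroup.list_prod_mem G (fun z hz => hKG z (hl z hz))
    have hkey : state l.prod v = state l'.prod v₂ := by
      conv_lhs => rw [hvsplit]
      rw [← (hGaut _ hlG).state_state v₁ v₂, hstate]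
    rw [hkey]
    exact prodAbsorb L l' hNl' (by omega) v₂ (by omega)
  -- Step 6: linear-length K-product decomposition
  have step6 : ∀ u : Vertex d, ∀ c ∈ OS g, ∀ q : ℕ, q < orbitCard c u →
      ∃ l : List (Equiv.Perm (Vertex d)), (∀ y ∈ l, y ∈ K) ∧ l.length ≤ u.length ∧
        state (c ^ q) u = l.prod := by
    intro u
    induction u with
    | nil =>
      intro c hc q hq
      rw [(hOSaut c hc).orbitCard_nil] at hq
      have hq0 : q = 0 := by omega
      refine ⟨[], by simp, by simp, ?_⟩
      rw [hq0, pow_zero, state_one, List.prod_nil]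
    | cons x u₂ ih =>
      intro c hc q hq
      have hcaut := hOSaut c hc
      set k := orbitCard c [x] with hk
      have hkpos : 0 < k := hcaut.orbitCard_pos [x]
      set c₁ := state (c ^ k) [x] with hc₁def
      have hc₁OS : c₁ ∈ OS g := OS_closed hg hc [x]
      have horb : orbitCard c (x :: u₂) = k * orbitCard c₁ u₂ := by
        have := hcaut.orbitCard_append [x] u₂
        simpa using this
      have hQ : q / k < orbitCard c₁ u₂ := by
        rw [Nat.div_lt_iff_lt_mul hkpos]
        rw [horb] at hq
        calc q < k * orbitCard c₁ u₂ := hq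
          _ = orbitCard c₁ u₂ * k := Nat.mul_comm _ _
      have hr : q % k < k := Nat.mod_lt _ hkpos
      obtain ⟨l₂, hl₂K, hl₂len, hl₂⟩ := ih c₁ hc₁OS (q / k) hQ
      have hPmem : c ^ (q % k) ∈ P :=
        Set.mem_image2_of_mem hc (lt_of_lt_of_le hr (hcaut.orbitCard_level_one_le x))
      set F₁ := state (c ^ (q % k)) ([x] ++ (c₁ ^ (q / k)) u₂) with hF₁def
      have hF₁K : F₁ ∈ K := by
        rcases le_or_gt nP ([x] ++ (c₁ ^ (q / k)) u₂).length with h | h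
        · exact Or.inl (hnP _ hPmem _ h)
        · exact Or.inr (Set.mem_image2_of_mem hPmem (le_of_lt h))
      refine ⟨F₁ :: l₂, ?_, ?_, ?_⟩
      · intro y hy
        rcases List.mem_cons.mp hy with rfl | hy'
        · exact hF₁K
        · exact hl₂K y hy'
      · simp only [List.length_cons]
        omega
      · rw [List.prod_cons, ← hl₂]
        exact split_state_pow hcaut [x] u₂ q
  -- constants
  set M := nK + L0 + 1 with hMdef
  have hMpos : 0 < M := by omega
  set Lstar := 2 * M + 4 with hLstar
  set Dstar := nK + L0 * Lstar + 1 with hDstar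
  have hDL : 1 + Dstar ≤ 2 ^ Lstar := by
    have h2M : M < 2 ^ M := Nat.lt_two_pow_self (n := M)
    have hpow : 2 ^ Lstar = 16 * (2 ^ M * 2 ^ M) := by
      rw [hLstar, show 2 * M + 4 = M + M + 4 by ring, pow_add, pow_add]
      ring
    rw [hpow]
    nlinarith [h2M, hMpos]
  -- Step 8: bounded-length K-product decomposition
  have main : ∀ n : ℕ, ∀ u : Vertex d, u.length = n → ∀ c ∈ OS g, ∀ q : ℕ,
      q < orbitCard c u → ∃ l : List (Equiv.Perm (Vertex d)),
        (∀ y ∈ l, y ∈ K) ∧ l.length ≤ 1 + Dstar ∧ state (c ^ q) u = l.prod := by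
    intro n
    induction n using Nat.strong_induction_on with
    | _ n ihn =>
      intro u hu c hc q hq
      rcases le_or_gt u.length Dstar with hsmall | hbig
      · obtain ⟨l, h1, h2, h3⟩ := step6 u c hc q hq
        exact ⟨l, h1, by omega, h3⟩
      · set u₁ := u.take (u.length - Dstar) with hu₁
        set u₂ := u.drop (u.length - Dstar) with hu₂
        have hu12 : u = u₁ ++ u₂ := (List.take_append_drop _ u).symm
        have hlen1 : u₁.length = u.length - Dstar := by rw [hu₁, List.length_take]; omega
        have hlen2 : u₂.length = Dstar := by rw [hu₂, List.length_drop]; omega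
        have hcaut := hOSaut c hc
        set m₁ := orbitCard c u₁ with hm₁
        have hm₁pos : 0 < m₁ := hcaut.orbitCard_pos u₁
        set c₁ := state (c ^ m₁) u₁ with hc₁def
        have hc₁OS : c₁ ∈ OS g := OS_closed hg hc u₁
        have hc₁aut := hOSaut c₁ hc₁OS
        have horb : orbitCard c (u₁ ++ u₂) = m₁ * orbitCard c₁ u₂ :=
          hcaut.orbitCard_append u₁ u₂
        have hq' : q < m₁ * orbitCard c₁ u₂ := by
          rw [← horb, ← hu12]
          exact hq
        have hQ : q / m₁ < orbitCard c₁ u₂ := by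
          rw [Nat.div_lt_iff_lt_mul hm₁pos]
          calc q < m₁ * orbitCard c₁ u₂ := hq'
            _ = orbitCard c₁ u₂ * m₁ := Nat.mul_comm _ _
        obtain ⟨l₂, hl₂K, hl₂len, hl₂⟩ := step6 u₂ c₁ hc₁OS (q / m₁) hQ
        -- inner partial section at the shorter prefix
        have hq₁ : q % m₁ < m₁ := Nat.mod_lt _ hm₁pos
        obtain ⟨l'', hKl'', hlen'', hprod''⟩ := ihn (u.length - Dstar) (by omega) u₁ hlen1 c hc
          (q % m₁) hq₁
        set z := (c₁ ^ (q / m₁)) u₂ with hzdef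
        have hzlen : z.length = Dstar := by
          rw [hzdef, (hc₁aut.pow (q / m₁)).1 u₂, hlen2]
        have hF₁Nuc : state (c ^ (q % m₁)) (u₁ ++ z) ∈ Nuc := by
          have hstep : state (c ^ (q % m₁)) (u₁ ++ z) = state (state (c ^ (q % m₁)) u₁) z :=
            ((hcaut.pow (q % m₁)).state_state u₁ z).symm
          rw [hstep, hprod'']
          apply KAbsorb Lstar l'' hKl'' (by omega) z (by omega)
        refine ⟨state (c ^ (q % m₁)) (u₁ ++ z) :: l₂, ?_, ?_, ?_⟩
        · intro y hy
          rcases List.mem_cons.mp hy with rfl | hy'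
          · exact Or.inl hF₁Nuc
          · exact hl₂K y hy'
        · simp only [List.length_cons]
          omega
        · rw [List.prod_cons, ← hl₂]
          conv_lhs => rw [hu12]
          exact split_state_pow hcaut u₁ u₂ q
  -- conclusion
  apply Set.Finite.subset (((finite_bounded_prods K hKfin (1 + Dstar)).union hOSg))
  rintro s ⟨b, hb, u, q, hqle, rfl⟩
  rcases lt_or_eq_of_le hqle with hlt | heq
  · obtain ⟨l, h1, h2, h3⟩ := main u.length u rfl b hb q hlt
    exact Or.inl ⟨l, h3.symm, h2, h1⟩
  · rw [heq]
    exact Or.inr (OS_closed hg hb u)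

end Contracting
section PairMachinery

variable {d : ℕ}

lemma OS_isTreeAut {g b : Equiv.Perm (Vertex d)} (hg : IsTreeAut g) (hb : b ∈ OS g) :
    IsTreeAut b := by
  obtain ⟨v, rfl⟩ := hb
  exact (hg.pow _).state_isTreeAut v

lemma pow_mod_orbit {a : Equiv.Perm (Vertex d)} (ha : IsTreeAut a) (v : Vertex d) (j : ℕ) :
    (a ^ j) v = (a ^ (j % orbitCard a v)) v := by
  conv_lhs => rw [show j = j % orbitCard a v + orbitCard a v * (j / orbitCard a v) from
    (Nat.mod_add_div j _).symm]
  rw [pow_add, Equiv.Perm.mul_apply, (ha.pow_fix_iff).mpr ⟨j / orbitCard a v, rfl⟩]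

lemma exists_pow_back {a : Equiv.Perm (Vertex d)} (ha : IsTreeAut a) {v w : Vertex d} {j : ℕ}
    (h : (a ^ j) v = w) : ∃ j' : ℕ, (a ^ j') w = v := by
  set m := orbitCard a v with hm
  refine ⟨m - j % m, ?_⟩
  have h1 : (a ^ (j % m)) v = w := by rw [← pow_mod_orbit ha v j]; exact h
  rw [← h1, ← Equiv.Perm.mul_apply, ← pow_add]
  have h2 : m - j % m + j % m = m :=
    Nat.sub_add_cancel (le_of_lt (Nat.mod_lt j (ha.orbitCard_pos v)))
  rw [h2]
  exact ha.pow_orbitCard_fix v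

open scoped Classical in
/-- the finset of letters in the `⟨a⟩`-orbit of the letter `x`. -/
noncomputable def repSet (a : Equiv.Perm (Vertex d)) (x : Fin d) : Finset (Fin d) :=
  Finset.univ.filter (fun y => ∃ j : ℕ, (a ^ j) [x] = [y])

lemma mem_repSet {a : Equiv.Perm (Vertex d)} {x y : Fin d} :
    y ∈ repSet a x ↔ ∃ j : ℕ, (a ^ j) [x] = [y] := by
  rw [repSet]
  classical
  simp

lemma self_mem_repSet (a : Equiv.Perm (Vertex d)) (x : Fin d) : x ∈ repSet a x :=
  mem_repSet.mpr ⟨0, rfl⟩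

lemma repSet_eq {a : Equiv.Perm (Vertex d)} (ha : IsTreeAut a) {x y : Fin d} {j : ℕ}
    (h : (a ^ j) [x] = [y]) : repSet a x = repSet a y := by
  obtain ⟨j', hj'⟩ := exists_pow_back ha h
  ext z
  rw [mem_repSet, mem_repSet]
  constructor
  · rintro ⟨i, hi⟩
    exact ⟨i + j', by rw [pow_add, Equiv.Perm.mul_apply, hj', hi]⟩
  · rintro ⟨i, hi⟩
    exact ⟨i + j, by rw [pow_add, Equiv.Perm.mul_apply, h, hi]⟩

/-- the representative of the `⟨a⟩`-orbit of the letter `x`. -/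
noncomputable def rep (a : Equiv.Perm (Vertex d)) (x : Fin d) : Fin d :=
  (repSet a x).min' ⟨x, self_mem_repSet a x⟩

lemma rep_spec (a : Equiv.Perm (Vertex d)) (x : Fin d) : ∃ j : ℕ, (a ^ j) [x] = [rep a x] :=
  mem_repSet.mp ((repSet a x).min'_mem _)

lemma rep_orbit_eq {a : Equiv.Perm (Vertex d)} (ha : IsTreeAut a) {x y : Fin d} {j : ℕ}
    (h : (a ^ j) [x] = [y]) : rep a x = rep a y := by
  have hset := repSet_eq ha h
  rw [rep, rep]
  congr 1

lemma exists_idx {a : Equiv.Perm (Vertex d)} (ha : IsTreeAut a) (x : Fin d) :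
    ∃ i : ℕ, (a ^ i) [rep a x] = [x] := by
  obtain ⟨j, hj⟩ := rep_spec a x
  exact exists_pow_back ha hj

open scoped Classical in
/-- position of the letter `x` in its orbit, counted from the representative. -/
noncomputable def idx (a : Equiv.Perm (Vertex d)) (x : Fin d) : ℕ :=
  if h : ∃ i : ℕ, (a ^ i) [rep a x] = [x] then Nat.find h else 0

lemma idx_spec {a : Equiv.Perm (Vertex d)} (ha : IsTreeAut a) (x : Fin d) :
    (a ^ idx a x) [rep a x] = [x] := by
  rw [idx, dif_pos (exists_idx ha x)]
  exact Nat.find_spec (exists_idx ha x)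

lemma idx_lt {a : Equiv.Perm (Vertex d)} (ha : IsTreeAut a) (x : Fin d) :
    idx a x < orbitCard a [rep a x] := by
  obtain ⟨i₀, hi₀⟩ := exists_idx ha x
  have hred : (a ^ (i₀ % orbitCard a [rep a x])) [rep a x] = [x] := by
    rw [← pow_mod_orbit ha _ i₀]; exact hi₀
  have hlt : i₀ % orbitCard a [rep a x] < orbitCard a [rep a x] :=
    Nat.mod_lt _ (ha.orbitCard_pos _)
  have : idx a x ≤ i₀ % orbitCard a [rep a x] := by
    rw [idx, dif_pos (exists_idx ha x)]
    exact Nat.find_min' _ hred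
  omega

lemma idx_unique {a : Equiv.Perm (Vertex d)} (ha : IsTreeAut a) {x : Fin d} {i : ℕ}
    (hi : i < orbitCard a [rep a x]) (h : (a ^ i) [rep a x] = [x]) : i = idx a x :=
  ha.orbit_inj hi (idx_lt ha x) (by rw [h, idx_spec ha x])

lemma rep_rep {a : Equiv.Perm (Vertex d)} (ha : IsTreeAut a) (x : Fin d) :
    rep a (rep a x) = rep a x := by
  obtain ⟨j, hj⟩ := rep_spec a x
  exact (rep_orbit_eq ha hj).symm

lemma idx_rep {a : Equiv.Perm (Vertex d)} (ha : IsTreeAut a) (x : Fin d) :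
    idx a (rep a x) = 0 := by
  have h0 : (a ^ 0) [rep a (rep a x)] = [rep a x] := by
    rw [pow_zero, Equiv.Perm.one_apply, rep_rep ha x]
  exact (idx_unique ha (ha.orbitCard_pos _) h0).symm

lemma orbitCard_rep {a : Equiv.Perm (Vertex d)} (ha : IsTreeAut a) (x : Fin d) :
    orbitCard a [rep a x] = orbitCard a [x] := by
  obtain ⟨j, hj⟩ := rep_spec a x
  rw [← hj, ha.orbitCard_pow_apply]

open scoped Classical in
/-- a chosen conjugator in `Aut(T)` for a conjugate pair. -/
noncomputable def conjT (p : Equiv.Perm (Vertex d) × Equiv.Perm (Vertex d)) :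
    Equiv.Perm (Vertex d) :=
  if h : ∃ t : Equiv.Perm (Vertex d), IsTreeAut t ∧ t * p.1 * t⁻¹ = p.2 then h.choose else 1

lemma conjT_spec {p : Equiv.Perm (Vertex d) × Equiv.Perm (Vertex d)}
    (h : ∃ t : Equiv.Perm (Vertex d), IsTreeAut t ∧ t * p.1 * t⁻¹ = p.2) :
    IsTreeAut (conjT p) ∧ conjT p * p.1 * (conjT p)⁻¹ = p.2 := by
  rw [conjT, dif_pos h]
  exact h.choose_spec

/-- the set of conjugate pairs from the two orbit-signalizers. -/
def PairSet (f g : Equiv.Perm (Vertex d)) : Set (Equiv.Perm (Vertex d) × Equiv.Perm (Vertex d)) :=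
  {p | p.1 ∈ OS f ∧ p.2 ∈ OS g ∧ ∃ t : Equiv.Perm (Vertex d), IsTreeAut t ∧ t * p.1 * t⁻¹ = p.2}

/-- child pair of a conjugate pair at an orbit representative letter. -/
noncomputable def childP (p : Equiv.Perm (Vertex d) × Equiv.Perm (Vertex d)) (y : Fin d) :
    Equiv.Perm (Vertex d) × Equiv.Perm (Vertex d) :=
  (state (p.1 ^ orbitCard p.1 [y]) [y],
    state (p.2 ^ orbitCard p.2 (conjT p [y])) (conjT p [y]))

section WithPair

variable {f g : Equiv.Perm (Vertex d)}

lemma pair_aut1 (hf : IsTreeAut f) {p} (hp : p ∈ PairSet f g) : IsTreeAut p.1 :=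
  OS_isTreeAut hf hp.1

lemma pair_aut2 (hg : IsTreeAut g) {p} (hp : p ∈ PairSet f g) : IsTreeAut p.2 :=
  OS_isTreeAut hg hp.2.1

lemma pair_autT {p} (hp : p ∈ PairSet f g) : IsTreeAut (conjT p) := (conjT_spec hp.2.2).1

lemma pair_conj {p} (hp : p ∈ PairSet f g) : conjT p * p.1 * (conjT p)⁻¹ = p.2 :=
  (conjT_spec hp.2.2).2

/-- transfer of orbit sizes along the chosen conjugator. -/
lemma pair_orbT {p} (hp : p ∈ PairSet f g) (v : Vertex d) :
    orbitCard p.2 (conjT p v) = orbitCard p.1 v := by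
  conv_lhs => rw [← pair_conj hp]
  exact orbitCard_conj (conjT p) p.1 v

/-- pointwise conjugation of powers. -/
lemma pair_pow_apply {p} (hp : p ∈ PairSet f g) (n : ℕ) (v : Vertex d) :
    (p.2 ^ n) (conjT p v) = conjT p ((p.1 ^ n) v) := by
  conv_lhs => rw [← pair_conj hp]
  rw [conj_pow_eq]
  simp

lemma childP_fst (p : Equiv.Perm (Vertex d) × Equiv.Perm (Vertex d)) (y : Fin d) :
    (childP p y).1 = state (p.1 ^ orbitCard p.1 [y]) [y] := rfl

lemma pair_childP_snd {p} (hp : p ∈ PairSet f g) (y : Fin d) :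
    (childP p y).2 = state (p.2 ^ orbitCard p.1 [y]) (conjT p [y]) := by
  rw [childP, pair_orbT hp [y]]

lemma pair_childP_conj (hf : IsTreeAut f) {p} (hp : p ∈ PairSet f g) (y : Fin d) :
    state (conjT p) [y] * (childP p y).1 * (state (conjT p) [y])⁻¹ = (childP p y).2 := by
  rw [pair_childP_snd hp y, childP_fst]
  have h1 : p.2 ^ orbitCard p.1 [y] =
      conjT p * p.1 ^ orbitCard p.1 [y] * (conjT p)⁻¹ := by
    rw [← conj_pow_eq, pair_conj hp]
  rw [h1, state_conj (pair_autT hp) ((pair_aut1 hf hp).pow _)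
    ((pair_aut1 hf hp).pow_orbitCard_fix [y])]

lemma pair_childP_mem (hf : IsTreeAut f) (hg : IsTreeAut g) {p} (hp : p ∈ PairSet f g)
    (y : Fin d) : childP p y ∈ PairSet f g := by
  refine ⟨OS_closed hf hp.1 [y], ?_, ?_⟩
  · rw [childP]
    exact OS_closed hg hp.2.1 (conjT p [y])
  · exact ⟨state (conjT p) [y], (pair_autT hp).state_isTreeAut [y], pair_childP_conj hf hp y⟩

end WithPair

end PairMachinery
section ConjugatorConstruction

variable {d : ℕ}

/-- fueled recursive definition of the conjugator associated to a conjugate pair. -/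
noncomputable def Hn : ℕ → (Equiv.Perm (Vertex d) × Equiv.Perm (Vertex d)) →
    Vertex d → Vertex d
  | 0, _, _ => []
  | n + 1, p, v =>
    match v with
    | [] => []
    | x :: w =>
      (p.2 ^ idx p.1 x) (conjT p [rep p.1 x]) ++
        (state (p.2 ^ idx p.1 x) (conjT p [rep p.1 x]))
          (Hn n (childP p (rep p.1 x)) ((state (p.1 ^ idx p.1 x) [rep p.1 x])⁻¹ w))

/-- the conjugator as a function on vertices. -/
noncomputable def Hfun (p : Equiv.Perm (Vertex d) × Equiv.Perm (Vertex d))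
    (v : Vertex d) : Vertex d := Hn v.length p v

lemma Hfun_nil (p : Equiv.Perm (Vertex d) × Equiv.Perm (Vertex d)) :
    Hfun p ([] : Vertex d) = [] := rfl

lemma Hfun_cons {p : Equiv.Perm (Vertex d) × Equiv.Perm (Vertex d)}
    (hp1 : IsTreeAut p.1) (x : Fin d) (w : Vertex d) :
    Hfun p (x :: w) =
      (p.2 ^ idx p.1 x) (conjT p [rep p.1 x]) ++
        (state (p.2 ^ idx p.1 x) (conjT p [rep p.1 x]))
          (Hfun (childP p (rep p.1 x)) ((state (p.1 ^ idx p.1 x) [rep p.1 x])⁻¹ w)) := by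
  have hlen : ((state (p.1 ^ idx p.1 x) [rep p.1 x])⁻¹ w).length = w.length :=
    (((hp1.pow _).state_isTreeAut _).inv).1 w
  have hrw : Hfun (childP p (rep p.1 x)) ((state (p.1 ^ idx p.1 x) [rep p.1 x])⁻¹ w)
      = Hn w.length (childP p (rep p.1 x)) ((state (p.1 ^ idx p.1 x) [rep p.1 x])⁻¹ w) := by
    rw [Hfun, hlen]
  rw [hrw]
  show Hn (w.length + 1) p (x :: w) = _
  rfl

section WithPairH

variable {f g : Equiv.Perm (Vertex d)}

lemma pair_first_letter (hf : IsTreeAut f) {p} (hp : p ∈ PairSet f g) (x : Fin d) :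
    (p.2 ^ idx p.1 x) (conjT p [rep p.1 x]) = conjT p [x] := by
  rw [pair_pow_apply hp, idx_spec (pair_aut1 hf hp) x]

lemma Hfun_length_aux (hf : IsTreeAut f) (hg : IsTreeAut g) :
    ∀ n : ℕ, ∀ p ∈ PairSet f g, ∀ v : Vertex d, v.length ≤ n →
      (Hfun p v).length = v.length := by
  intro n
  induction n with
  | zero =>
    intro p hp v hv
    have hvnil : v = [] := List.length_eq_zero_iff.mp (by omega)
    rw [hvnil, Hfun_nil]
  | succ n ih =>
    intro p hp v hv
    cases v with
    | nil => rw [Hfun_nil]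
    | cons x w =>
      rw [Hfun_cons (pair_aut1 hf hp) x w, List.length_append]
      have hπ : IsTreeAut (state (p.1 ^ idx p.1 x) [rep p.1 x])⁻¹ :=
        (((pair_aut1 hf hp).pow _).state_isTreeAut _).inv
      have h1 : ((p.2 ^ idx p.1 x) (conjT p [rep p.1 x])).length = 1 := by
        rw [((pair_aut2 hg hp).pow _).1, (pair_autT hp).1]
        rfl
      have hwlen : ((state (p.1 ^ idx p.1 x) [rep p.1 x])⁻¹ w).length = w.length := hπ.1 w
      have h2 : ((state (p.2 ^ idx p.1 x) (conjT p [rep p.1 x]))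
          (Hfun (childP p (rep p.1 x)) ((state (p.1 ^ idx p.1 x) [rep p.1 x])⁻¹ w))).length
          = w.length := by
        rw [(((pair_aut2 hg hp).pow _).state_isTreeAut _).1]
        rw [ih (childP p (rep p.1 x)) (pair_childP_mem hf hg hp _) _
          (by rw [hwlen]; simp only [List.length_cons] at hv; omega)]
        exact hwlen
      rw [h1, h2]
      simp only [List.length_cons]
      omega

lemma Hfun_length (hf : IsTreeAut f) (hg : IsTreeAut g) {p} (hp : p ∈ PairSet f g) (v : Vertex d) :
    (Hfun p v).length = v.length :=
  Hfun_length_aux hf hg v.length p hp v le_rfl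

lemma Hfun_inj_aux (hf : IsTreeAut f) (hg : IsTreeAut g) :
    ∀ n : ℕ, ∀ p ∈ PairSet f g, ∀ v v' : Vertex d, v.length ≤ n →
      Hfun p v = Hfun p v' → v = v' := by
  intro n
  induction n with
  | zero =>
    intro p hp v v' hv heq
    have hvnil : v = [] := List.length_eq_zero_iff.mp (by omega)
    subst hvnil
    have : (Hfun p v').length = 0 := by
      rw [← heq, Hfun_nil]
      rfl
    rw [Hfun_length hf hg hp] at this
    exact (List.length_eq_zero_iff.mp this).symm
  | succ n ih =>
    intro p hp v v' hv heq
    cases v with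
    | nil =>
      have : (Hfun p v').length = 0 := by
        rw [← heq, Hfun_nil]
        rfl
      rw [Hfun_length hf hg hp] at this
      exact (List.length_eq_zero_iff.mp this).symm
    | cons x w =>
      cases v' with
      | nil =>
        exfalso
        have h0 : (Hfun p (x :: w)).length = 0 := by rw [heq, Hfun_nil]; rfl
        rw [Hfun_length hf hg hp] at h0
        simp at h0
      | cons x' w' =>
        rw [Hfun_cons (pair_aut1 hf hp) x w, Hfun_cons (pair_aut1 hf hp) x' w',
          pair_first_letter hf hp x, pair_first_letter hf hp x'] at heq
        have hl1 : (conjT p [x]).length = 1 := by rw [(pair_autT hp).1]; rfl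
        have hl2 : (conjT p [x']).length = 1 := by rw [(pair_autT hp).1]; rfl
        obtain ⟨he1, he2⟩ := List.append_inj heq (by rw [hl1, hl2])
        have hx : x = x' := by
          have := (conjT p).injective he1
          injection this
        subst hx
        have he2' : Hfun (childP p (rep p.1 x)) ((state (p.1 ^ idx p.1 x) [rep p.1 x])⁻¹ w)
            = Hfun (childP p (rep p.1 x)) ((state (p.1 ^ idx p.1 x) [rep p.1 x])⁻¹ w') :=
          (state (p.2 ^ idx p.1 x) (conjT p [rep p.1 x])).injective he2
        have hπ : IsTreeAut (state (p.1 ^ idx p.1 x) [rep p.1 x])⁻¹ :=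
          (((pair_aut1 hf hp).pow _).state_isTreeAut _).inv
        have hwlen : ((state (p.1 ^ idx p.1 x) [rep p.1 x])⁻¹ w).length = w.length := hπ.1 w
        have := ih (childP p (rep p.1 x)) (pair_childP_mem hf hg hp _) _ _
          (by rw [hwlen]; simp only [List.length_cons] at hv; omega) he2'
        have hw : w = w' := (state (p.1 ^ idx p.1 x) [rep p.1 x])⁻¹.injective this
        rw [hw]

lemma exists_singleton_of_length_one {l : Vertex d} (h : l.length = 1) :
    ∃ x : Fin d, l = [x] := by
  match l, h with
  | [x], _ => exact ⟨x, rfl⟩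

lemma Hfun_surj_aux (hf : IsTreeAut f) (hg : IsTreeAut g) :
    ∀ n : ℕ, ∀ p ∈ PairSet f g, ∀ u : Vertex d, u.length ≤ n →
      ∃ v : Vertex d, Hfun p v = u := by
  intro n
  induction n with
  | zero =>
    intro p hp u hu
    have : u = [] := List.length_eq_zero_iff.mp (by omega)
    exact ⟨[], by rw [Hfun_nil, this]⟩
  | succ n ih =>
    intro p hp u hu
    cases u with
    | nil => exact ⟨[], Hfun_nil p⟩
    | cons y u' =>
      have h1 : ((conjT p)⁻¹ [y]).length = 1 := ((pair_autT hp).inv).1 [y]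
      obtain ⟨x, hx⟩ := exists_singleton_of_length_one h1
      have hyx : conjT p [x] = [y] := by
        rw [← hx]
        exact perm_apply_inv_self (conjT p) [y]
      set B := state (p.2 ^ idx p.1 x) (conjT p [rep p.1 x]) with hB
      have hBaut : IsTreeAut B := ((pair_aut2 hg hp).pow _).state_isTreeAut _
      have hzlen : (B⁻¹ u').length = u'.length := hBaut.inv.1 u'
      obtain ⟨w₁, hw₁⟩ := ih (childP p (rep p.1 x)) (pair_childP_mem hf hg hp _) (B⁻¹ u')
        (by simp only [List.length_cons] at hu; omega)
      refine ⟨x :: (state (p.1 ^ idx p.1 x) [rep p.1 x]) w₁, ?_⟩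
      rw [Hfun_cons (pair_aut1 hf hp) x _, pair_first_letter hf hp x]
      rw [perm_inv_apply_self, hw₁, ← hB]
      rw [perm_apply_inv_self, hyx]
      rfl

lemma Hfun_bijective (hf : IsTreeAut f) (hg : IsTreeAut g) {p} (hp : p ∈ PairSet f g) : Function.Bijective (Hfun p) := by
  constructor
  · intro v v' h
    exact Hfun_inj_aux hf hg v.length p hp v v' le_rfl h
  · intro u
    exact Hfun_surj_aux hf hg u.length p hp u le_rfl

end WithPairH

open scoped Classical in
/-- the conjugator as a permutation of the vertex set. -/
noncomputable def HP (p : Equiv.Perm (Vertex d) × Equiv.Perm (Vertex d)) :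
    Equiv.Perm (Vertex d) :=
  if h : Function.Bijective (Hfun p) then Equiv.ofBijective _ h else 1

section WithPairH2

variable {f g : Equiv.Perm (Vertex d)}

lemma HP_apply (hf : IsTreeAut f) (hg : IsTreeAut g) {p} (hp : p ∈ PairSet f g) (v : Vertex d) : HP p v = Hfun p v := by
  rw [HP, dif_pos (Hfun_bijective hf hg hp)]
  rfl

lemma prefix_append_left {s l l' : Vertex d} (h : l <+: l') : s ++ l <+: s ++ l' := by
  obtain ⟨t, ht⟩ := h
  exact ⟨t, by rw [List.append_assoc, ht]⟩

lemma Hfun_prefix_aux (hf : IsTreeAut f) (hg : IsTreeAut g) :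
    ∀ n : ℕ, ∀ p ∈ PairSet f g, ∀ v w : Vertex d, v.length ≤ n →
      Hfun p v <+: Hfun p (v ++ w) := by
  intro n
  induction n with
  | zero =>
    intro p hp v w hv
    have : v = [] := List.length_eq_zero_iff.mp (by omega)
    rw [this, Hfun_nil]
    exact List.nil_prefix
  | succ n ih =>
    intro p hp v w hv
    cases v with
    | nil =>
      rw [Hfun_nil]
      exact List.nil_prefix
    | cons x v' =>
      have hcons : (x :: v') ++ w = x :: (v' ++ w) := rfl
      rw [hcons, Hfun_cons (pair_aut1 hf hp) x v', Hfun_cons (pair_aut1 hf hp) x (v' ++ w)]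
      apply prefix_append_left
      set π := (state (p.1 ^ idx p.1 x) [rep p.1 x])⁻¹ with hπdef
      have hπ : IsTreeAut π := (((pair_aut1 hf hp).pow _).state_isTreeAut _).inv
      have hsplit : π (v' ++ w) = π v' ++ state π v' w := hπ.append_state v' w
      have hpre : Hfun (childP p (rep p.1 x)) (π v') <+:
          Hfun (childP p (rep p.1 x)) (π (v' ++ w)) := by
        rw [hsplit]
        apply ih (childP p (rep p.1 x)) (pair_childP_mem hf hg hp _)
        rw [hπ.1]
        simp only [List.length_cons] at hv
        omega
      exact (((pair_aut2 hg hp).pow _).state_isTreeAut _).prefix_mono hpre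

lemma HP_isTreeAut (hf : IsTreeAut f) (hg : IsTreeAut g) {p} (hp : p ∈ PairSet f g) : IsTreeAut (HP p) := by
  constructor
  · intro v
    rw [HP_apply hf hg hp]
    exact Hfun_length hf hg hp v
  · intro v w
    rw [HP_apply hf hg hp, HP_apply hf hg hp]
    exact Hfun_prefix_aux hf hg v.length p hp v w le_rfl

end WithPairH2

end ConjugatorConstruction
section ConjProperty

variable {d : ℕ} {f g : Equiv.Perm (Vertex d)}

lemma Hfun_conj_aux (hf : IsTreeAut f) (hg : IsTreeAut g) :
    ∀ n : ℕ, ∀ p ∈ PairSet f g, ∀ v : Vertex d, v.length ≤ n →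
      Hfun p (p.1 v) = p.2 (Hfun p v) := by
  intro n
  induction n with
  | zero =>
    intro p hp v hv
    have hvnil : v = [] := List.length_eq_zero_iff.mp (by omega)
    subst hvnil
    rw [(pair_aut1 hf hp).apply_nil, Hfun_nil, (pair_aut2 hg hp).apply_nil]
  | succ n ih =>
    intro p hp v hv
    cases v with
    | nil => rw [(pair_aut1 hf hp).apply_nil, Hfun_nil, (pair_aut2 hg hp).apply_nil]
    | cons x w =>
      have ha := pair_aut1 hf hp
      have hb := pair_aut2 hg hp
      have ht := pair_autT hp
      have hrepx₀ : rep p.1 (rep p.1 x) = rep p.1 x := rep_rep ha x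
      have hidx : (p.1 ^ idx p.1 x) [rep p.1 x] = [x] := idx_spec ha x
      have hik : idx p.1 x < orbitCard p.1 [rep p.1 x] := idx_lt ha x
      have hch : childP p (rep p.1 x) ∈ PairSet f g := pair_childP_mem hf hg hp (rep p.1 x)
      obtain ⟨x₁, hx₁⟩ := exists_singleton_of_length_one
        (show (p.1 [x]).length = 1 from ha.1 [x])
      have hx₁pow : (p.1 ^ (idx p.1 x + 1)) [rep p.1 x] = [x₁] := by
        rw [pow_succ', Equiv.Perm.mul_apply, hidx, hx₁]
      have hstep : p.1 (x :: w) = x₁ :: (state p.1 [x]) w := by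
        have h := ha.append_state [x] w
        rw [hx₁] at h
        exact h
      have hrepx₁ : rep p.1 x₁ = rep p.1 x := by
        rw [← rep_orbit_eq ha hx₁pow, hrepx₀]
      have hArec : state (p.1 ^ (idx p.1 x + 1)) [rep p.1 x] =
          state p.1 [x] * state (p.1 ^ idx p.1 x) [rep p.1 x] := by
        rw [pow_succ', state_mul ha (ha.pow _), hidx]
      have hBfl : (p.2 ^ idx p.1 x) (conjT p [rep p.1 x]) = conjT p [x] :=
        pair_first_letter hf hp x
      have hBrec : state (p.2 ^ (idx p.1 x + 1)) (conjT p [rep p.1 x]) =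
          state p.2 (conjT p [x]) * state (p.2 ^ idx p.1 x) (conjT p [rep p.1 x]) := by
        rw [pow_succ', state_mul hb (hb.pow _), hBfl]
      have hbt : p.2 (conjT p [x]) = conjT p (p.1 [x]) := by
        have h := pair_pow_apply hp 1 [x]
        rwa [pow_one, pow_one] at h
      have hlenw : ((state (p.1 ^ idx p.1 x) [rep p.1 x])⁻¹ w).length = w.length :=
        ((ha.pow _).state_isTreeAut _).inv.1 w
      -- RHS common computation
      have hRHS : p.2 (Hfun p (x :: w)) =
          conjT p (p.1 [x]) ++ (state (p.2 ^ (idx p.1 x + 1)) (conjT p [rep p.1 x]))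
            (Hfun (childP p (rep p.1 x)) ((state (p.1 ^ idx p.1 x) [rep p.1 x])⁻¹ w)) := by
        rw [Hfun_cons ha x w, hBfl, hb.append_state (conjT p [x]), hbt, hBrec]
        rfl
      rcases Nat.lt_or_ge (idx p.1 x + 1) (orbitCard p.1 [rep p.1 x]) with hlt | hge
      · -- no wrap-around
        have hidx₁ : idx p.1 x₁ = idx p.1 x + 1 := by
          refine (idx_unique ha ?_ ?_).symm
          · rw [hrepx₁]; exact hlt
          · rw [hrepx₁]; exact hx₁pow
        have hLHS : Hfun p (p.1 (x :: w)) =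
            conjT p [x₁] ++ (state (p.2 ^ (idx p.1 x + 1)) (conjT p [rep p.1 x]))
              (Hfun (childP p (rep p.1 x)) ((state (p.1 ^ idx p.1 x) [rep p.1 x])⁻¹ w)) := by
          rw [hstep, Hfun_cons ha x₁ ((state p.1 [x]) w), pair_first_letter hf hp x₁,
            hidx₁, hrepx₁]
          congr 2
          rw [hArec, mul_inv_rev, Equiv.Perm.mul_apply, perm_inv_apply_self]
        rw [hLHS, hRHS, hx₁]
      · -- wrap-around
        have hk : idx p.1 x + 1 = orbitCard p.1 [rep p.1 x] := by omega
        have hx₁x₀ : x₁ = rep p.1 x := by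
          have hfix : (p.1 ^ (idx p.1 x + 1)) [rep p.1 x] = [rep p.1 x] := by
            rw [hk]; exact ha.pow_orbitCard_fix [rep p.1 x]
          have := hx₁pow.symm.trans hfix
          injection this
        have hsax2 : state p.1 [x] =
            (childP p (rep p.1 x)).1 * (state (p.1 ^ idx p.1 x) [rep p.1 x])⁻¹ := by
          rw [childP_fst, ← hk, hArec]
          group
        have hLHS : Hfun p (p.1 (x :: w)) =
            conjT p [rep p.1 x] ++ (childP p (rep p.1 x)).2
              (Hfun (childP p (rep p.1 x)) ((state (p.1 ^ idx p.1 x) [rep p.1 x])⁻¹ w)) := by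
          rw [hstep, hx₁x₀, Hfun_cons ha (rep p.1 x) ((state p.1 [x]) w), idx_rep ha x,
            hrepx₀]
          simp only [pow_zero, state_one, inv_one, Equiv.Perm.one_apply]
          congr 1
          have harg : (state p.1 [x]) w = (childP p (rep p.1 x)).1
              ((state (p.1 ^ idx p.1 x) [rep p.1 x])⁻¹ w) := by
            rw [hsax2]; rfl
          rw [harg]
          exact ih (childP p (rep p.1 x)) hch _ (by
            rw [hlenw]
            simp only [List.length_cons] at hv
            omega)
        have hRHS' : p.2 (Hfun p (x :: w)) =
            conjT p [rep p.1 x] ++ (childP p (rep p.1 x)).2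
              (Hfun (childP p (rep p.1 x)) ((state (p.1 ^ idx p.1 x) [rep p.1 x])⁻¹ w)) := by
          rw [hRHS, hx₁, hx₁x₀, hk, pair_childP_snd hp]
        rw [hLHS, hRHS']

lemma HP_conj (hf : IsTreeAut f) (hg : IsTreeAut g) {p} (hp : p ∈ PairSet f g) :
    HP p * p.1 * (HP p)⁻¹ = p.2 := by
  have hpt : HP p * p.1 = p.2 * HP p := by
    ext v : 1
    rw [Equiv.Perm.mul_apply, Equiv.Perm.mul_apply, HP_apply hf hg hp,
      HP_apply hf hg hp]
    exact Hfun_conj_aux hf hg v.length p hp v le_rfl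
  rw [hpt]
  group

lemma HP_state_rep (hf : IsTreeAut f) (hg : IsTreeAut g) {p} (hp : p ∈ PairSet f g)
    (x₀ : Fin d) (hx₀ : rep p.1 x₀ = x₀) :
    state (HP p) [x₀] = HP (childP p x₀) := by
  have ha := pair_aut1 hf hp
  have hidx0 : idx p.1 x₀ = 0 := by
    conv_lhs => rw [← hx₀]
    exact idx_rep ha x₀
  ext w : 1
  rw [(HP_isTreeAut hf hg hp).state_apply]
  rw [HP_apply hf hg hp, HP_apply hf hg (pair_childP_mem hf hg hp x₀)]
  have hcons : ([x₀] ++ w : Vertex d) = x₀ :: w := rfl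
  rw [hcons, Hfun_cons ha x₀ w, hidx0, hx₀]
  simp only [pow_zero, state_one, inv_one, Equiv.Perm.one_apply]
  have hlen1 : (conjT p [x₀]).length = 1 := (pair_autT hp).1 [x₀]
  have : ([x₀] : Vertex d).length = 1 := rfl
  rw [this, ← hlen1, List.drop_left]

end ConjProperty
section CanonicalPath

variable {d : ℕ}

/-- canonical orbit-representative path below a pair. -/
noncomputable def Cpath : ℕ → (Equiv.Perm (Vertex d) × Equiv.Perm (Vertex d)) →
    Vertex d → Vertex d
  | 0, _, _ => []
  | n + 1, p, v => match v with
    | [] => []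
    | x :: w => rep p.1 x ::
        Cpath n (childP p (rep p.1 x)) ((state (p.1 ^ idx p.1 x) [rep p.1 x])⁻¹ w)

/-- the orbit position of a vertex relative to its canonical path. -/
noncomputable def Nexp : ℕ → (Equiv.Perm (Vertex d) × Equiv.Perm (Vertex d)) →
    Vertex d → ℕ
  | 0, _, _ => 0
  | n + 1, p, v => match v with
    | [] => 0
    | x :: w => idx p.1 x + orbitCard p.1 [rep p.1 x] *
        Nexp n (childP p (rep p.1 x)) ((state (p.1 ^ idx p.1 x) [rep p.1 x])⁻¹ w)

/-- the pair reached along the canonical path. -/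
noncomputable def Qpair : ℕ → (Equiv.Perm (Vertex d) × Equiv.Perm (Vertex d)) →
    Vertex d → Equiv.Perm (Vertex d) × Equiv.Perm (Vertex d)
  | 0, p, _ => p
  | _ + 1, p, [] => p
  | n + 1, p, x :: w => Qpair n (childP p (rep p.1 x))
      ((state (p.1 ^ idx p.1 x) [rep p.1 x])⁻¹ w)

variable {f g : Equiv.Perm (Vertex d)}

lemma Qpair_mem (hf : IsTreeAut f) (hg : IsTreeAut g) :
    ∀ n : ℕ, ∀ p ∈ PairSet f g, ∀ v : Vertex d, Qpair n p v ∈ PairSet f g := by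
  intro n
  induction n with
  | zero => intro p hp v; exact hp
  | succ n ih =>
    intro p hp v
    cases v with
    | nil => exact hp
    | cons x w => exact ih _ (pair_childP_mem hf hg hp _) _

lemma Cpath_spec (hf : IsTreeAut f) (hg : IsTreeAut g) :
    ∀ n : ℕ, ∀ p ∈ PairSet f g, ∀ v : Vertex d, v.length ≤ n →
      (p.1 ^ Nexp n p v) (Cpath n p v) = v ∧
      Nexp n p v < orbitCard p.1 (Cpath n p v) ∧
      state (HP p) (Cpath n p v) = HP (Qpair n p v) := by
  intro n
  induction n with
  | zero =>
    intro p hp v hv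
    have hvnil : v = [] := List.length_eq_zero_iff.mp (by omega)
    subst hvnil
    refine ⟨rfl, ?_, ?_⟩
    · rw [show Nexp 0 p ([] : Vertex d) = 0 from rfl,
        show Cpath 0 p ([] : Vertex d) = [] from rfl,
        (pair_aut1 hf hp).orbitCard_nil]
      omega
    · rw [show Cpath 0 p ([] : Vertex d) = [] from rfl,
        show Qpair 0 p ([] : Vertex d) = p from rfl,
        (HP_isTreeAut hf hg hp).state_nil]
  | succ n ih =>
    intro p hp v hv
    cases v with
    | nil =>
      refine ⟨rfl, ?_, ?_⟩
      · rw [show Nexp (n + 1) p ([] : Vertex d) = 0 from rfl,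
          show Cpath (n + 1) p ([] : Vertex d) = [] from rfl,
          (pair_aut1 hf hp).orbitCard_nil]
        omega
      · rw [show Cpath (n + 1) p ([] : Vertex d) = [] from rfl,
          show Qpair (n + 1) p ([] : Vertex d) = p from rfl,
          (HP_isTreeAut hf hg hp).state_nil]
    | cons x w =>
      have ha := pair_aut1 hf hp
      have hch : childP p (rep p.1 x) ∈ PairSet f g := pair_childP_mem hf hg hp (rep p.1 x)
      have hπaut : IsTreeAut (state (p.1 ^ idx p.1 x) [rep p.1 x])⁻¹ :=
        ((ha.pow _).state_isTreeAut _).inv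
      have hπlen : ((state (p.1 ^ idx p.1 x) [rep p.1 x])⁻¹ w).length = w.length := hπaut.1 w
      obtain ⟨ih1, ih2, ih3⟩ := ih (childP p (rep p.1 x)) hch
        ((state (p.1 ^ idx p.1 x) [rep p.1 x])⁻¹ w)
        (by rw [hπlen]; simp only [List.length_cons] at hv; omega)
      set C' := Cpath n (childP p (rep p.1 x)) ((state (p.1 ^ idx p.1 x) [rep p.1 x])⁻¹ w)
        with hC'
      set N' := Nexp n (childP p (rep p.1 x)) ((state (p.1 ^ idx p.1 x) [rep p.1 x])⁻¹ w)
        with hN'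
      have hCcons : Cpath (n + 1) p (x :: w) = rep p.1 x :: C' := rfl
      have hNcons : Nexp (n + 1) p (x :: w) =
          idx p.1 x + orbitCard p.1 [rep p.1 x] * N' := rfl
      have hQcons : Qpair (n + 1) p (x :: w) =
          Qpair n (childP p (rep p.1 x)) ((state (p.1 ^ idx p.1 x) [rep p.1 x])⁻¹ w) := rfl
      set k := orbitCard p.1 [rep p.1 x] with hk
      have hfix : (p.1 ^ (k * N')) [rep p.1 x] = [rep p.1 x] :=
        ha.pow_fix_iff.mpr ⟨N', rfl⟩
      have hstpow : state (p.1 ^ (k * N')) [rep p.1 x] = (childP p (rep p.1 x)).1 ^ N' := by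
        rw [childP_fst, pow_mul, state_pow_of_fix (ha.pow k) (ha.pow_orbitCard_fix _)]
      refine ⟨?_, ?_, ?_⟩
      · -- translation property
        rw [hNcons, hCcons]
        have e0 : p.1 ^ (idx p.1 x + k * N') = p.1 ^ idx p.1 x * p.1 ^ (k * N') := pow_add _ _ _
        rw [e0, Equiv.Perm.mul_apply]
        have e1 : (p.1 ^ (k * N')) (rep p.1 x :: C') = rep p.1 x :: ((childP p (rep p.1 x)).1 ^ N') C' := by
          have := (ha.pow (k * N')).append_state [rep p.1 x] C'
          rw [hfix, hstpow] at this
          exact this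
        rw [e1, ih1]
        have e2 := (ha.pow (idx p.1 x)).append_state [rep p.1 x]
          ((state (p.1 ^ idx p.1 x) [rep p.1 x])⁻¹ w)
        rw [idx_spec ha x, perm_apply_inv_self] at e2
        exact e2
      · -- exponent bound
        rw [hNcons, hCcons]
        have horb : orbitCard p.1 (rep p.1 x :: C') = k * orbitCard (childP p (rep p.1 x)).1 C' := by
          have := ha.orbitCard_append [rep p.1 x] C'
          rw [childP_fst]
          simpa using this
        rw [horb]
        have hik : idx p.1 x < k := idx_lt ha x
        calc idx p.1 x + k * N' < k + k * N' := by omega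
          _ = k * (N' + 1) := by ring
          _ ≤ k * orbitCard (childP p (rep p.1 x)).1 C' :=
              Nat.mul_le_mul_left k (Nat.succ_le_of_lt ih2)
      · -- state along the canonical path
        rw [hCcons, hQcons, ← ih3]
        have hx₀rep : rep p.1 (rep p.1 x) = rep p.1 x := rep_rep ha x
        have e3 : (rep p.1 x :: C' : Vertex d) = [rep p.1 x] ++ C' := rfl
        rw [e3, ← (HP_isTreeAut hf hg hp).state_state [rep p.1 x] C',
          HP_state_rep hf hg hp (rep p.1 x) hx₀rep]

lemma state_comm_conj {X a b : Equiv.Perm (Vertex d)} (hX : IsTreeAut X) (ha : IsTreeAut a)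
    (hb : IsTreeAut b) (hcomm : X * a = b * X) (N : ℕ) (W : Vertex d) :
    state X ((a ^ N) W) = state (b ^ N) (X W) * state X W * (state (a ^ N) W)⁻¹ := by
  have hcommN : X * a ^ N = b ^ N * X := by
    induction N with
    | zero => simp
    | succ N ihN =>
      rw [pow_succ, ← mul_assoc, ihN, mul_assoc, hcomm, ← mul_assoc, ← pow_succ]
  have h1 : state (X * a ^ N) W = state X ((a ^ N) W) * state (a ^ N) W :=
    state_mul hX (ha.pow N) W
  have h2 : state (b ^ N * X) W = state (b ^ N) (X W) * state X W :=
    state_mul (hb.pow N) hX W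
  rw [hcommN, h2] at h1
  exact (eq_mul_inv_of_mul_eq h1.symm)

end CanonicalPath
section Assembly

variable {d : ℕ}

lemma self_mem_OS {f : Equiv.Perm (Vertex d)} (hf : IsTreeAut f) : f ∈ OS f :=
  ⟨[], by rw [hf.orbitCard_nil, pow_one, hf.state_nil]⟩

lemma backward_direction {f g : Equiv.Perm (Vertex d)} (hf : IsTreeAut f) (hg : IsTreeAut g)
    (hbf : BoundedAut f) (hcg : ContractingAut g) (hOSg : FiniteOS g)
    (hconj : ∃ h : Equiv.Perm (Vertex d), IsTreeAut h ∧ h * f * h⁻¹ = g) :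
    ∃ h : Equiv.Perm (Vertex d), IsTreeAut h ∧ FiniteState h ∧ h * f * h⁻¹ = g := by
  have hp₀ : ((f, g) : Equiv.Perm (Vertex d) × Equiv.Perm (Vertex d)) ∈ PairSet f g :=
    ⟨self_mem_OS hf, self_mem_OS hg, hconj⟩
  refine ⟨HP (f, g), HP_isTreeAut hf hg hp₀, ?_, HP_conj hf hg hp₀⟩
  -- finite-state
  have hOSffin : (OS f).Finite := finite_OS_of_bounded hf hbf
  have hCf : {s : Equiv.Perm (Vertex d) | ∃ w : Vertex d, ∃ q : ℕ, q ≤ orbitCard f w ∧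
      s = state (f ^ q) w}.Finite := finite_partial_sections_of_bounded hf hbf
  have hCg : {s : Equiv.Perm (Vertex d) | ∃ b ∈ OS g, ∃ u : Vertex d, ∃ q : ℕ,
      q ≤ orbitCard b u ∧ s = state (b ^ q) u}.Finite :=
    finite_partial_sections_of_contracting hg hcg hOSg
  have hPairfin : (PairSet f g).Finite := by
    apply Set.Finite.subset (hOSffin.prod hOSg)
    rintro p ⟨h1, h2, -⟩
    exact ⟨h1, h2⟩
  have hHfin : (HP '' PairSet f g).Finite := hPairfin.image HP
  have hCfInv : ((fun s : Equiv.Perm (Vertex d) => s⁻¹) ''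
      {s : Equiv.Perm (Vertex d) | ∃ w : Vertex d, ∃ q : ℕ, q ≤ orbitCard f w ∧
        s = state (f ^ q) w}).Finite := hCf.image _
  apply Set.Finite.subset (Set.Finite.image2 (· * ·) hCg
    (Set.Finite.image2 (· * ·) hHfin hCfInv))
  rintro _ ⟨v, rfl⟩
  obtain ⟨h1, h2, h3⟩ := Cpath_spec hf hg v.length (f, g) hp₀ v le_rfl
  set W := Cpath v.length ((f, g) : Equiv.Perm (Vertex d) × Equiv.Perm (Vertex d)) v with hW
  set N := Nexp v.length ((f, g) : Equiv.Perm (Vertex d) × Equiv.Perm (Vertex d)) v with hN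
  have hXaut : IsTreeAut (HP (f, g)) := HP_isTreeAut hf hg hp₀
  have hcomm : HP (f, g) * f = g * HP (f, g) := by
    have hc := HP_conj hf hg hp₀
    calc HP (f, g) * f = (HP (f, g) * f * (HP (f, g))⁻¹) * HP (f, g) := by group
      _ = g * HP (f, g) := by rw [hc]
  have hdecomp : state (HP (f, g)) v =
      state (g ^ N) (HP (f, g) W) * (HP (Qpair v.length (f, g) v) *
        (state (f ^ N) W)⁻¹) := by
    conv_lhs => rw [← h1]
    rw [state_comm_conj hXaut hf hg hcomm N W, h3, mul_assoc]
  show state (HP (f, g)) v ∈ _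
  rw [hdecomp]
  apply Set.mem_image2_of_mem
  · -- g-side partial power section
    refine ⟨g, self_mem_OS hg, HP (f, g) W, N, ?_, rfl⟩
    have horb : orbitCard g (HP (f, g) W) = orbitCard f W := by
      have hc : HP (f, g) * f * (HP (f, g))⁻¹ = g := HP_conj hf hg hp₀
      have horb' := orbitCard_conj (HP (f, g)) f W
      rw [hc] at horb'
      exact horb'
    rw [horb]
    exact le_of_lt h2
  apply Set.mem_image2_of_mem
  · exact ⟨Qpair v.length (f, g) v, Qpair_mem hf hg v.length (f, g) hp₀ v, rfl⟩
  · exact ⟨state (f ^ N) W, ⟨W, N, le_of_lt h2, rfl⟩, rfl⟩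

end Assembly

/-- Let `f` be a bounded automorphism and `g` a contracting
automorphism which are conjugate in `Aut(T)`.  Then `f` and `g` are conjugate
in the group `F(X)` of finite-state automorphisms if and only if `g` has finite
orbit-signalizer. -/
theorem bounded_conj_contracting_in_FSG_iff_finiteOS
    (d : ℕ) (hd : 2 ≤ d) (f g : Equiv.Perm (Vertex d))
    (hf : IsTreeAut f) (hg : IsTreeAut g)
    (hbf : BoundedAut f) (hcg : ContractingAut g)
    (hconj : ∃ h : Equiv.Perm (Vertex d), IsTreeAut h ∧ h * f * h⁻¹ = g) :
    (∃ h : Equiv.Perm (Vertex d), IsTreeAut h ∧ FiniteState h ∧ h * f * h⁻¹ = g) ↔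
      FiniteOS g := by
  constructor
  · rintro ⟨h, hh, hFSh, hcj⟩
    exact finiteOS_of_conj hf hh hFSh (finite_OS_of_bounded hf hbf) hcj
  · intro hOSg
    exact backward_direction hf hg hbf hcg hOSg hconj
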